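/- arXiv:1210.5371 — 6 statements merged into one kernel-verified Lean document; each statement's English description precedes it below -/
import Mathlib

section
/- Let b > 2, let D = [[d11,d12],[d12,d22]] be a real symmetric positive definite 2×2 matrix, and let a11 > 0. Then ∫ over {(a12,a22) ∈ ℝ² : a11·a22 − a12² > 0} of (a11·a22 − a12²)^((b−2)/2) · exp(−(1/2)·(d11·a11 + 2·d12·a12 + d22·a22)) d(a12,a22) = (2π/d22)^(1/2) · I₁(b, d22) · a11^((b−1)/2) · exp(−(1/2)·(d11 − d12²/d22)·a11). (That is, the unnormalized 2×2 Wishart W(b,D) density integrated over (a12,a22) with a11 fixed equals J(b,D,a11) := (2π/d22)^(1/2) · I₁(b,d22) · a11^((b−1)/2) · exp(−(1/2)·D_{11.2}·a11), where D_{11.2} := d11 − d12²/d22.) -/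
open MeasureTheory Real

lemma integral_Ioi_comp_add (f : ℝ → ℝ) (s : ℝ) :
    ∫ y in Set.Ioi s, f y = ∫ t in Set.Ioi (0 : ℝ), f (t + s) := by
  have h1 : ∀ t : ℝ, (Set.Ioi (0:ℝ)).indicator (fun u => f (u + s)) t
      = (Set.Ioi s).indicator f (t + s) := by
    intro t
    by_cases ht : t ∈ Set.Ioi (0:ℝ)
    · rw [Set.indicator_of_mem ht, Set.indicator_of_mem (by simpa using ht)]
    · rw [Set.indicator_of_notMem ht, Set.indicator_of_notMem (by simpa using ht)]
  rw [← integral_indicator measurableSet_Ioi, ← integral_indicator measurableSet_Ioi]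
  simp_rw [h1]
  exact (integral_add_right_eq_self ((Set.Ioi s).indicator f) s).symm

lemma integrableOn_Ioi_comp_add_iff (f : ℝ → ℝ) (s : ℝ) :
    IntegrableOn (fun t => f (t + s)) (Set.Ioi (0:ℝ)) ↔ IntegrableOn f (Set.Ioi s) := by
  have h := (measurePreserving_add_right (volume : Measure ℝ) s).integrableOn_comp_preimage
    (MeasurableEquiv.addRight s).measurableEmbedding (f := f) (s := Set.Ioi s)
  have hpre : (fun x : ℝ => x + s) ⁻¹' Set.Ioi s = Set.Ioi (0:ℝ) := by
    ext x; simp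
  simpa [Function.comp_def, hpre] using h

lemma integrable_exp_neg_quad {β : ℝ} (hβ : 0 < β) (γ : ℝ) :
    Integrable fun x : ℝ => Real.exp (-(β * x ^ 2 + γ * x)) := by
  have heq : ∀ x : ℝ, Real.exp (-(β * x ^ 2 + γ * x))
      = Real.exp (γ ^ 2 / (4 * β)) * Real.exp (-β * (x + γ / (2 * β)) ^ 2) := by
    intro x
    rw [← Real.exp_add]
    congr 1
    field_simp
    ring
  simp_rw [heq]
  exact ((integrable_exp_neg_mul_sq hβ).comp_add_right (γ / (2 * β))).const_mul _

lemma integral_exp_neg_quad {β : ℝ} (hβ : 0 < β) (γ : ℝ) :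
    (∫ x : ℝ, Real.exp (-(β * x ^ 2 + γ * x)))
      = Real.sqrt (π / β) * Real.exp (γ ^ 2 / (4 * β)) := by
  have heq : ∀ x : ℝ, Real.exp (-(β * x ^ 2 + γ * x))
      = Real.exp (γ ^ 2 / (4 * β)) * Real.exp (-β * (x + γ / (2 * β)) ^ 2) := by
    intro x
    rw [← Real.exp_add]
    congr 1
    field_simp
    ring
  simp_rw [heq]
  rw [integral_const_mul, integral_add_right_eq_self (fun x => Real.exp (-β * x ^ 2)),
    integral_gaussian]
  ring


/-- `I₁(b,d) = ∫₀^∞ t^((b−2)/2) · exp(−d·t/2) dt`, the normalizing constant of the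
one-dimensional Wishart distribution `W(b,d)`. -/
noncomputable def I1 (b d : ℝ) : ℝ :=
  ∫ t in Set.Ioi (0 : ℝ), t ^ ((b - 2) / 2) * Real.exp (-(d * t) / 2)

/-- The unnormalized 2×2 Wishart `W(b,D)` density integrated over `(a12, a22)` with
`a11` fixed equals `J(b,D,a11) = (2π/d22)^(1/2) · I₁(b,d22) · a11^((b−1)/2) ·
exp(−(1/2)·(d11 − d12²/d22)·a11)`. -/
theorem wishart_2x2_cond_normalizing_constant
    (b d11 d12 d22 a11 : ℝ) (hb : 2 < b)
    (hD : (!![d11, d12; d12, d22] : Matrix (Fin 2) (Fin 2) ℝ).PosDef)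
    (ha : 0 < a11) :
    (∫ q in {q : ℝ × ℝ | 0 < a11 * q.2 - q.1 ^ 2},
        (a11 * q.2 - q.1 ^ 2) ^ ((b - 2) / 2) *
          Real.exp (-(1 / 2) * (d11 * a11 + 2 * d12 * q.1 + d22 * q.2)))
      = (2 * π / d22) ^ ((1 : ℝ) / 2) * I1 b d22 * a11 ^ ((b - 1) / 2) *
          Real.exp (-(1 / 2) * (d11 - d12 ^ 2 / d22) * a11) := by
  have hd22 : 0 < d22 := by
    have h := hD.dotProduct_mulVec_pos (x := ![0, 1]) (by
      intro h0
      have := congrFun h0 1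
      simp at this)
    simpa [Matrix.mulVec, dotProduct, Fin.sum_univ_two] using h
  set c : ℝ := (b - 2) / 2 with hc_def
  have hc : 0 < c := by rw [hc_def]; linarith
  set β : ℝ := d22 / (2 * a11) with hβ_def
  have hβ : 0 < β := by rw [hβ_def]; positivity
  set S : Set (ℝ × ℝ) := {q : ℝ × ℝ | 0 < a11 * q.2 - q.1 ^ 2} with hS_def
  set f : ℝ × ℝ → ℝ := fun q =>
    (a11 * q.2 - q.1 ^ 2) ^ c * Real.exp (-(1 / 2) * (d11 * a11 + 2 * d12 * q.1 + d22 * q.2))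
    with hf_def
  set F : ℝ × ℝ → ℝ := S.indicator f with hF_def
  have hScont : Continuous fun q : ℝ × ℝ => a11 * q.2 - q.1 ^ 2 := by continuity
  have hSmeas : MeasurableSet S := measurableSet_lt measurable_const hScont.measurable
  have hrpow : Continuous fun z : ℝ => z ^ c := by
    rw [continuous_iff_continuousAt]
    intro x
    exact Real.continuousAt_rpow_const x c (Or.inr hc.le)
  have hfmeas : Measurable f := by
    rw [hf_def]
    exact ((hrpow.comp hScont).measurable).mul
      ((Real.continuous_exp.comp (by continuity)).measurable)
  have hFmeas : Measurable F := hfmeas.indicator hSmeas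
  have hpre : ∀ x : ℝ, (fun y : ℝ => (x, y)) ⁻¹' S = Set.Ioi (x ^ 2 / a11) := by
    intro x
    ext y
    simp only [Set.mem_preimage, hS_def, Set.mem_setOf_eq, Set.mem_Ioi, sub_pos,
      div_lt_iff₀ ha, mul_comm]
  have hfiber : ∀ x : ℝ, (fun y => F (x, y))
      = (Set.Ioi (x ^ 2 / a11)).indicator (fun y => f (x, y)) := by
    intro x
    funext y
    by_cases h : y ∈ Set.Ioi (x ^ 2 / a11)
    · have h' : (x, y) ∈ S := by rw [← hpre x] at h; exact h
      rw [Set.indicator_of_mem h, hF_def, Set.indicator_of_mem h']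
    · have h' : (x, y) ∉ S := by rw [← hpre x] at h; exact h
      rw [Set.indicator_of_notMem h, hF_def, Set.indicator_of_notMem h']
  have hpt : ∀ x : ℝ, ∀ t ∈ Set.Ioi (0:ℝ),
      f (x, t + x ^ 2 / a11)
        = (a11 ^ c * (Real.exp (-(d11 * a11) / 2) * Real.exp (-(β * x ^ 2 + d12 * x))))
            * (t ^ c * Real.exp (-(d22 * t) / 2)) := by
    intro x t ht
    have ht' : (0:ℝ) ≤ t := le_of_lt ht
    have h1 : a11 * (t + x ^ 2 / a11) - x ^ 2 = a11 * t := by field_simp; ring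
    have hA : -(1 / 2) * (d11 * a11 + 2 * d12 * x + d22 * (t + x ^ 2 / a11))
        = (-(d11 * a11) / 2 + -(β * x ^ 2 + d12 * x)) + -(d22 * t) / 2 := by
      rw [hβ_def]; field_simp; ring
    simp only [hf_def]
    rw [h1, Real.mul_rpow ha.le ht', hA, Real.exp_add, Real.exp_add]
    ring
  have hbase : IntegrableOn (fun t : ℝ => t ^ c * Real.exp (-(d22 * t) / 2))
      (Set.Ioi (0:ℝ)) := by
    have h := integrableOn_rpow_mul_exp_neg_mul_rpow (p := 1) (s := c) (b := d22 / 2)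
      (by linarith) zero_lt_one (by positivity)
    refine h.congr_fun (fun t ht => ?_) measurableSet_Ioi
    simp only [Real.rpow_one]
    rw [show -(d22 / 2) * t = -(d22 * t) / 2 by ring]
  have hinner_int : ∀ x : ℝ, Integrable (fun y => F (x, y)) := by
    intro x
    rw [hfiber x, integrable_indicator_iff measurableSet_Ioi]
    rw [← integrableOn_Ioi_comp_add_iff (fun y => f (x, y)) (x ^ 2 / a11)]
    refine IntegrableOn.congr_fun ?_ (fun t ht => (hpt x t ht).symm) measurableSet_Ioi
    exact hbase.const_mul _
  have hinner_val : ∀ x : ℝ, (∫ y, F (x, y))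
      = (a11 ^ c * I1 b d22 * Real.exp (-(d11 * a11) / 2))
          * Real.exp (-(β * x ^ 2 + d12 * x)) := by
    intro x
    rw [hfiber x, integral_indicator measurableSet_Ioi,
      integral_Ioi_comp_add (fun y => f (x, y)) (x ^ 2 / a11),
      setIntegral_congr_fun measurableSet_Ioi (hpt x), integral_const_mul]
    have hI : (∫ t in Set.Ioi (0:ℝ), t ^ c * Real.exp (-(d22 * t) / 2)) = I1 b d22 := rfl
    rw [hI]
    ring
  have hFnonneg : ∀ q, 0 ≤ F q := fun q =>
    Set.indicator_nonneg
      (fun p hp => mul_nonneg (Real.rpow_nonneg (le_of_lt hp) _) (Real.exp_pos _).le) q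
  have hFint : Integrable F ((volume : Measure ℝ).prod volume) := by
    refine (integrable_prod_iff hFmeas.aestronglyMeasurable).2 ⟨?_, ?_⟩
    · exact Filter.Eventually.of_forall hinner_int
    · have hnorm : (fun x : ℝ => ∫ y, ‖F (x, y)‖)
          = fun x : ℝ => (a11 ^ c * I1 b d22 * Real.exp (-(d11 * a11) / 2))
              * Real.exp (-(β * x ^ 2 + d12 * x)) := by
        funext x
        rw [← hinner_val x]
        have hn : ∀ y : ℝ, ‖F (x, y)‖ = F (x, y) := fun y => Real.norm_of_nonneg (hFnonneg _)
        simp_rw [hn]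
      rw [hnorm]
      exact (integrable_exp_neg_quad hβ d12).const_mul _
  rw [← integral_indicator hSmeas, ← hF_def, Measure.volume_eq_prod, integral_prod F hFint]
  simp only [hinner_val]
  rw [integral_const_mul, integral_exp_neg_quad hβ d12]
  have h1 : Real.sqrt (π / β) = (2 * π / d22) ^ ((1:ℝ) / 2) * a11 ^ ((1:ℝ) / 2) := by
    rw [Real.sqrt_eq_rpow,
      show π / β = (2 * π / d22) * a11 by rw [hβ_def]; field_simp,
      Real.mul_rpow (by positivity) ha.le]
  have h2 : a11 ^ c * a11 ^ ((1:ℝ) / 2) = a11 ^ ((b - 1) / 2) := by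
    rw [← Real.rpow_add ha]
    congr 1
    rw [hc_def]; ring
  have h3 : Real.exp (-(d11 * a11) / 2) * Real.exp (d12 ^ 2 / (4 * β))
      = Real.exp (-(1 / 2) * (d11 - d12 ^ 2 / d22) * a11) := by
    rw [← Real.exp_add]
    congr 1
    rw [hβ_def]; field_simp; ring
  rw [h1, ← h2, ← h3]
  ring
end

section
/- Let b > 2 and let D = [[d11,d12],[d12,d22]] be a real symmetric positive definite 2×2 matrix. Define the 2×2 Wishart normalizing constant I₂(b,D) := ∫ over {(a11,a12,a22) ∈ ℝ³ : a11 > 0 and a11·a22 − a12² > 0} of (a11·a22 − a12²)^((b−2)/2) · exp(−(1/2)·(d11·a11 + 2·d12·a12 + d22·a22)) d(a11,a12,a22). Then I₂(b,D) = (2π/d22)^(1/2) · I₁(b, d22) · I₁(b+1, d11 − d12²/d22). -/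
open MeasureTheory Real

noncomputable def e3 : (ℝ × ℝ × ℝ) ≃ₗ[ℝ] (Fin 3 → ℝ) where
  toFun v := ![v.1, v.2.1, v.2.2]
  invFun w := (w 0, w 1, w 2)
  map_add' v w := by funext i; fin_cases i <;> simp
  map_smul' r v := by funext i; fin_cases i <;> simp
  left_inv v := by simp
  right_inv w := by funext i; fin_cases i <;> simp

noncomputable def p1 : (ℝ × ℝ × ℝ) →L[ℝ] ℝ := ContinuousLinearMap.fst ℝ ℝ (ℝ × ℝ)
noncomputable def p2 : (ℝ × ℝ × ℝ) →L[ℝ] ℝ :=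
  (ContinuousLinearMap.fst ℝ ℝ ℝ).comp (ContinuousLinearMap.snd ℝ ℝ (ℝ × ℝ))
noncomputable def p3 : (ℝ × ℝ × ℝ) →L[ℝ] ℝ :=
  (ContinuousLinearMap.snd ℝ ℝ ℝ).comp (ContinuousLinearMap.snd ℝ ℝ (ℝ × ℝ))

noncomputable def Tder (a b c d : ℝ) : (ℝ × ℝ × ℝ) →L[ℝ] (ℝ × ℝ × ℝ) :=
  p1.prod ((a • p1 + b • p2).prod (c • p1 + d • p2 + p3))

@[simp] lemma Tder_apply (a b c d : ℝ) (v : ℝ × ℝ × ℝ) :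
    Tder a b c d v = (v.1, a * v.1 + b * v.2.1, c * v.1 + d * v.2.1 + v.2.2) := by
  simp [Tder, p1, p2, p3]

lemma Tder_det (a b c d : ℝ) : (Tder a b c d).det = b := by
  have h := LinearMap.det_conj ((Tder a b c d : (ℝ×ℝ×ℝ) →L[ℝ] (ℝ×ℝ×ℝ)) : (ℝ×ℝ×ℝ) →ₗ[ℝ] (ℝ×ℝ×ℝ)) e3
  rw [ContinuousLinearMap.det, ← h, ← LinearMap.det_toMatrix']
  have : LinearMap.toMatrix' ((e3 : (ℝ×ℝ×ℝ) →ₗ[ℝ] (Fin 3 → ℝ)) ∘ₗ ((Tder a b c d : (ℝ×ℝ×ℝ) →ₗ[ℝ] (ℝ×ℝ×ℝ)) ∘ₗ (e3.symm : (Fin 3 → ℝ) →ₗ[ℝ] (ℝ×ℝ×ℝ))))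
      = !![1,0,0; a,b,0; c,d,1] := by
    ext i j
    fin_cases i <;> fin_cases j <;>
      simp [LinearMap.toMatrix'_apply, e3, Tder, p1, p2, p3]
  rw [this, Matrix.det_fin_three]
  simp

noncomputable def Tmap (c : ℝ) (v : ℝ × ℝ × ℝ) : ℝ × ℝ × ℝ :=
  (v.1, Real.sqrt v.1 * v.2.1 - c * v.1,
   v.2.2 + v.2.1 * v.2.1 - 2 * c * Real.sqrt v.1 * v.2.1 + c ^ 2 * v.1)

lemma Tmap_hasFDerivAt (c : ℝ) (x : ℝ × ℝ × ℝ) (hx : 0 < x.1) :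
    HasFDerivAt (Tmap c)
      (Tder (x.2.1 / (2 * Real.sqrt x.1) - c) (Real.sqrt x.1)
        (c ^ 2 - c * x.2.1 / Real.sqrt x.1) (2 * x.2.1 - 2 * c * Real.sqrt x.1)) x := by
  have hs0 : Real.sqrt x.1 ≠ 0 := (Real.sqrt_pos.2 hx).ne'
  have hfst : HasFDerivAt (fun v : ℝ × ℝ × ℝ => v.1) p1 x := hasFDerivAt_fst
  have hz1 : HasFDerivAt (fun v : ℝ × ℝ × ℝ => v.2.1) p2 x :=
    hasFDerivAt_fst.comp x hasFDerivAt_snd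
  have hz2 : HasFDerivAt (fun v : ℝ × ℝ × ℝ => v.2.2) p3 x :=
    hasFDerivAt_snd.comp x hasFDerivAt_snd
  have hsq : HasFDerivAt (fun v : ℝ × ℝ × ℝ => Real.sqrt v.1)
      ((1 / (2 * Real.sqrt x.1)) • p1) x :=
    (Real.hasDerivAt_sqrt hx.ne').comp_hasFDerivAt x hfst
  have h2 : HasFDerivAt (fun v : ℝ × ℝ × ℝ => Real.sqrt v.1 * v.2.1 - c * v.1)
      ((Real.sqrt x.1 • p2 + x.2.1 • ((1 / (2 * Real.sqrt x.1)) • p1)) - c • p1) x :=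
    ((hsq.mul hz1)).sub (hfst.const_mul c)
  have h3 : HasFDerivAt (fun v : ℝ × ℝ × ℝ =>
        v.2.2 + v.2.1 * v.2.1 - 2 * c * Real.sqrt v.1 * v.2.1 + c ^ 2 * v.1)
      (((p3 + (x.2.1 • p2 + x.2.1 • p2)) -
          ((2 * c * Real.sqrt x.1) • p2 + x.2.1 • ((2 * c) • ((1 / (2 * Real.sqrt x.1)) • p1))))
        + (c ^ 2) • p1) x :=
    ((hz2.add (hz1.mul hz1)).sub (((hsq.const_mul (2 * c)).mul hz1))).add (hfst.const_mul (c ^ 2))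
  have H := hfst.prodMk (h2.prodMk h3)
  have hEq : (p1.prod (((Real.sqrt x.1 • p2 + x.2.1 • ((1 / (2 * Real.sqrt x.1)) • p1)) - c • p1).prod
      (((p3 + (x.2.1 • p2 + x.2.1 • p2)) -
          ((2 * c * Real.sqrt x.1) • p2 + x.2.1 • ((2 * c) • ((1 / (2 * Real.sqrt x.1)) • p1))))
        + (c ^ 2) • p1)))
      = (Tder (x.2.1 / (2 * Real.sqrt x.1) - c) (Real.sqrt x.1)
        (c ^ 2 - c * x.2.1 / Real.sqrt x.1) (2 * x.2.1 - 2 * c * Real.sqrt x.1)) := by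
    apply ContinuousLinearMap.ext
    intro v
    simp only [Tder, ContinuousLinearMap.prod_apply, ContinuousLinearMap.add_apply,
      ContinuousLinearMap.coe_smul', Pi.smul_apply, ContinuousLinearMap.coe_sub',
      Pi.sub_apply, smul_eq_mul, Prod.mk.injEq]
    refine ⟨trivial, ?_, ?_⟩ <;> field_simp <;> ring
  rw [← hEq]
  exact H

lemma Tmap_image (c : ℝ) :
    Tmap c '' (Set.Ioi 0 ×ˢ (Set.univ ×ˢ Set.Ioi 0)) =
      {q : ℝ × ℝ × ℝ | 0 < q.1 ∧ 0 < q.1 * q.2.2 - q.2.1 ^ 2} := by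
  ext q
  constructor
  · rintro ⟨⟨t, z, u⟩, hmem, rfl⟩
    simp only [Set.mem_prod, Set.mem_Ioi, Set.mem_univ] at hmem
    obtain ⟨ht, -, hu⟩ := hmem
    have hs2 : Real.sqrt t * Real.sqrt t = t := Real.mul_self_sqrt ht.le
    refine ⟨ht, ?_⟩
    have key : (Tmap c (t, z, u)).1 * (Tmap c (t, z, u)).2.2 - (Tmap c (t, z, u)).2.1 ^ 2
        = t * u := by
      simp only [Tmap]
      linear_combination (-(z ^ 2)) * hs2
    rw [key]
    exact mul_pos ht hu
  · rintro ⟨hq1, hq2⟩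
    obtain ⟨q1, q2, q3⟩ := q
    simp only at hq1 hq2
    set r := Real.sqrt q1 with hrdef
    have hr : r ^ 2 = q1 := Real.sq_sqrt hq1.le
    have hr0 : r ≠ 0 := by
      rw [hrdef]; exact (Real.sqrt_pos.2 hq1).ne'
    refine ⟨(q1, (q2 + c * q1) / r, (q1 * q3 - q2 ^ 2) / q1),
      ⟨hq1, Set.mem_univ _, div_pos hq2 hq1⟩, ?_⟩
    simp only [Tmap, ← hrdef]
    rw [← hr]
    refine Prod.ext rfl (Prod.ext ?_ ?_) <;> (simp only; field_simp) <;> ring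

lemma Tmap_injOn (c : ℝ) : Set.InjOn (Tmap c) (Set.Ioi 0 ×ˢ (Set.univ ×ˢ Set.Ioi 0)) := by
  rintro ⟨t, z, u⟩ hx ⟨t', z', u'⟩ hy h
  simp only [Set.mem_prod, Set.mem_Ioi, Set.mem_univ] at hx hy
  simp only [Tmap, Prod.mk.injEq] at h
  obtain ⟨h1, h2, h3⟩ := h
  subst h1
  have hs0 : Real.sqrt t ≠ 0 := (Real.sqrt_pos.2 hx.1).ne'
  have hz : z = z' := by
    have h4 : Real.sqrt t * z = Real.sqrt t * z' := by linarith
    exact mul_left_cancel₀ hs0 h4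
  subst hz
  have hu : u = u' := by linarith [h3]
  subst hu; rfl

instance : MeasureTheory.Measure.IsAddHaarMeasure (volume : Measure (ℝ × ℝ)) :=
  MeasureTheory.Measure.prod.instIsAddHaarMeasure _ _

instance : MeasureTheory.Measure.IsAddHaarMeasure (volume : Measure (ℝ × ℝ × ℝ)) :=
  MeasureTheory.Measure.prod.instIsAddHaarMeasure _ _

/-- The 2×2 Wishart normalizing constant `I₂(b,D)` factors as
`(2π/d22)^(1/2) · I₁(b, d22) · I₁(b+1, d11 − d12²/d22)`. -/
theorem wishart_2x2_normalizing_constant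
    (b d11 d12 d22 : ℝ) (hb : 2 < b)
    (hD : (!![d11, d12; d12, d22] : Matrix (Fin 2) (Fin 2) ℝ).PosDef) :
    (∫ q in {q : ℝ × ℝ × ℝ | 0 < q.1 ∧ 0 < q.1 * q.2.2 - q.2.1 ^ 2},
        (q.1 * q.2.2 - q.2.1 ^ 2) ^ ((b - 2) / 2) *
          Real.exp (-(1 / 2) * (d11 * q.1 + 2 * d12 * q.2.1 + d22 * q.2.2)))
      = (2 * π / d22) ^ ((1 : ℝ) / 2) * I1 b d22 * I1 (b + 1) (d11 - d12 ^ 2 / d22) := by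
  have hd22 : 0 < d22 := by
    have h := hD.dotProduct_mulVec_pos (x := ![0, 1]) (by intro h; have := congr_fun h 1; norm_num at this)
    simpa [Matrix.mulVec, dotProduct, Fin.sum_univ_two] using h
  have hs : MeasurableSet (Set.Ioi (0:ℝ) ×ˢ ((Set.univ : Set ℝ) ×ˢ Set.Ioi (0:ℝ))) :=
    measurableSet_Ioi.prod (MeasurableSet.univ.prod measurableSet_Ioi)
  set c : ℝ := d12 / d22 with hc
  have hder : ∀ x ∈ (Set.Ioi (0:ℝ) ×ˢ ((Set.univ : Set ℝ) ×ˢ Set.Ioi (0:ℝ))),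
      HasFDerivWithinAt (Tmap c)
        ((fun x : ℝ × ℝ × ℝ => Tder (x.2.1 / (2 * Real.sqrt x.1) - c) (Real.sqrt x.1)
          (c ^ 2 - c * x.2.1 / Real.sqrt x.1) (2 * x.2.1 - 2 * c * Real.sqrt x.1)) x)
        (Set.Ioi (0:ℝ) ×ˢ ((Set.univ : Set ℝ) ×ˢ Set.Ioi (0:ℝ))) x :=
    fun x hx => (Tmap_hasFDerivAt c x hx.1).hasFDerivWithinAt
  rw [← Tmap_image c,
    integral_image_eq_integral_abs_det_fderiv_smul volume hs hder (Tmap_injOn c)]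
  have hcongr : Set.EqOn
      (fun x : ℝ × ℝ × ℝ =>
        |(Tder (x.2.1 / (2 * Real.sqrt x.1) - c) (Real.sqrt x.1)
          (c ^ 2 - c * x.2.1 / Real.sqrt x.1) (2 * x.2.1 - 2 * c * Real.sqrt x.1)).det| •
          (((Tmap c x).1 * (Tmap c x).2.2 - (Tmap c x).2.1 ^ 2) ^ ((b - 2) / 2) *
            Real.exp (-(1 / 2) *
              (d11 * (Tmap c x).1 + 2 * d12 * (Tmap c x).2.1 + d22 * (Tmap c x).2.2))))
      (fun x : ℝ × ℝ × ℝ =>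
        (x.1 ^ ((b + 1 - 2) / 2) * Real.exp (-((d11 - d12 ^ 2 / d22) * x.1) / 2)) *
          (Real.exp (-(d22 / 2) * x.2.1 ^ 2) *
            (x.2.2 ^ ((b - 2) / 2) * Real.exp (-(d22 * x.2.2) / 2))))
      (Set.Ioi (0:ℝ) ×ˢ ((Set.univ : Set ℝ) ×ˢ Set.Ioi (0:ℝ))) := by
    intro x hx
    have ht : (0:ℝ) < x.1 := hx.1
    have hu : (0:ℝ) < x.2.2 := hx.2.2
    have hst : Real.sqrt x.1 * Real.sqrt x.1 = x.1 := Real.mul_self_sqrt ht.le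
    simp only [Tder_det, smul_eq_mul]
    have h1 : (Tmap c x).1 * (Tmap c x).2.2 - (Tmap c x).2.1 ^ 2 = x.1 * x.2.2 := by
      simp only [Tmap]
      linear_combination (-(x.2.1 ^ 2)) * hst
    have h2 : d11 * (Tmap c x).1 + 2 * d12 * (Tmap c x).2.1 + d22 * (Tmap c x).2.2
        = (d11 - d12 ^ 2 / d22) * x.1 + d22 * x.2.1 ^ 2 + d22 * x.2.2 := by
      simp only [Tmap, hc]
      field_simp
      ring
    have h3 : Real.sqrt x.1 * x.1 ^ ((b - 2) / 2) = x.1 ^ ((b + 1 - 2) / 2) := by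
      rw [Real.sqrt_eq_rpow, ← Real.rpow_add ht]
      congr 1
      ring
    have h4 : Real.exp (-(1 / 2) *
          ((d11 - d12 ^ 2 / d22) * x.1 + d22 * x.2.1 ^ 2 + d22 * x.2.2))
        = Real.exp (-((d11 - d12 ^ 2 / d22) * x.1) / 2) *
            (Real.exp (-(d22 / 2) * x.2.1 ^ 2) * Real.exp (-(d22 * x.2.2) / 2)) := by
      rw [← Real.exp_add, ← Real.exp_add]
      congr 1
      ring
    rw [h1, h2, h4, abs_of_nonneg (Real.sqrt_nonneg _),
      Real.mul_rpow ht.le hu.le, ← h3]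
    ring
  rw [setIntegral_congr_fun hs hcongr]
  rw [Measure.volume_eq_prod]
  rw [setIntegral_prod_mul
    (fun t : ℝ => t ^ ((b + 1 - 2) / 2) * Real.exp (-((d11 - d12 ^ 2 / d22) * t) / 2))
    (fun y : ℝ × ℝ => Real.exp (-(d22 / 2) * y.1 ^ 2) *
      (y.2 ^ ((b - 2) / 2) * Real.exp (-(d22 * y.2) / 2)))
    (Set.Ioi 0) (Set.univ ×ˢ Set.Ioi 0)]
  rw [Measure.volume_eq_prod]
  rw [setIntegral_prod_mul
    (fun z : ℝ => Real.exp (-(d22 / 2) * z ^ 2))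
    (fun u : ℝ => u ^ ((b - 2) / 2) * Real.exp (-(d22 * u) / 2))
    Set.univ (Set.Ioi 0)]
  rw [Measure.restrict_univ, integral_gaussian]
  have hI1 : (∫ t in Set.Ioi (0:ℝ),
      t ^ ((b + 1 - 2) / 2) * Real.exp (-((d11 - d12 ^ 2 / d22) * t) / 2))
      = I1 (b + 1) (d11 - d12 ^ 2 / d22) := rfl
  have hI2 : (∫ u in Set.Ioi (0:ℝ),
      u ^ ((b - 2) / 2) * Real.exp (-(d22 * u) / 2)) = I1 b d22 := rfl
  have hg : Real.sqrt (π / (d22 / 2)) = (2 * π / d22) ^ ((1 : ℝ) / 2) := by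
    rw [show π / (d22 / 2) = 2 * π / d22 by field_simp, Real.sqrt_eq_rpow]
  rw [hI1, hI2, hg]
  ring
end

section
/- Let p ≥ 2, b > 2, let D be a real symmetric positive definite p×p matrix with entry d_{jj} > 0, and fix j ∈ V = {1,…,p}. For t ∈ ℝ let K(t) be a symmetric p×p matrix whose entries are all fixed except the (j,j) entry, which equals t; assume the submatrix K_{V∖{j},V∖{j}} (independent of t) is positive definite. Let c := K_{j,V∖{j}} · (K_{V∖{j},V∖{j}})^{−1} · K_{V∖{j},j} and let K⁰ := K(c). Then: (a) K(t) is positive definite if and only if t > c; and (b) ∫_c^∞ det(K(t))^((b−2)/2) · exp(−(1/2)·tr(D·K(t))) dt = I₁(b, d_{jj}) · det(K⁰_{V∖{j},V∖{j}})^((b−2)/2) · exp(−(1/2)·tr(D·K⁰)). -/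
open MeasureTheory Matrix Real

lemma posSemidef_unit_iff (M : Matrix Unit Unit ℝ) : M.PosSemidef ↔ 0 ≤ M () () := by
  rw [posSemidef_iff_dotProduct_mulVec]
  constructor
  · intro h
    simpa [Matrix.mulVec, dotProduct] using h.2 (fun _ => 1)
  · intro h
    refine ⟨?_, fun x => ?_⟩
    · ext ⟨⟩ ⟨⟩; simp [Matrix.conjTranspose_apply]
    · simp only [dotProduct, Matrix.mulVec, Fintype.univ_unit, Finset.sum_singleton,
        star_trivial]
      nlinarith [mul_self_nonneg (x ()), h]

lemma posDef_iff_det (n : Type*) [Fintype n] [DecidableEq n] (M : Matrix n n ℝ) :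
    M.PosDef ↔ M.PosSemidef ∧ M.det ≠ 0 := by
  constructor
  · exact fun h => ⟨h.posSemidef, h.det_pos.ne'⟩
  · rintro ⟨h1, h2⟩
    rw [posDef_iff_dotProduct_mulVec]
    refine ⟨h1.1, fun x hx => lt_of_le_of_ne (h1.dotProduct_mulVec_nonneg x) fun heq => hx ?_⟩
    have hMx : M *ᵥ x = 0 := (h1.dotProduct_mulVec_zero_iff x).mp heq.symm
    have : M⁻¹ *ᵥ (M *ᵥ x) = x := by
      rw [Matrix.mulVec_mulVec, Matrix.nonsing_inv_mul M (isUnit_iff_ne_zero.mpr h2),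
        Matrix.one_mulVec]
    rw [hMx, Matrix.mulVec_zero] at this
    exact this.symm

lemma det_unit (M : Matrix Unit Unit ℝ) : M.det = M () () := Matrix.det_unique M

lemma shift_Ioi (g : ℝ → ℝ) (c : ℝ) :
    (∫ t in Set.Ioi c, g (t - c)) = ∫ t in Set.Ioi (0:ℝ), g t := by
  rw [← MeasureTheory.integral_indicator measurableSet_Ioi,
    ← MeasureTheory.integral_indicator measurableSet_Ioi]
  rw [← MeasureTheory.integral_sub_right_eq_self (fun t => Set.indicator (Set.Ioi (0:ℝ)) g t) c]
  congr 1; ext t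
  by_cases ht : c < t
  · rw [Set.indicator_of_mem (Set.mem_Ioi.mpr ht), Set.indicator_of_mem (by simp [sub_pos.mpr ht])]
  · rw [Set.indicator_of_notMem (by simpa using ht),
      Set.indicator_of_notMem (by simp; linarith [not_lt.mp ht])]

/-- Integrating the `(j,j)` entry out of the G-Wishart density: with all other entries
of the symmetric matrix `K(t)` fixed, `K(t)` is positive definite iff `t > c` where
`c = K_{j,V∖{j}} (K_{V∖{j},V∖{j}})⁻¹ K_{V∖{j},j}`, and
`∫_c^∞ det(K(t))^((b−2)/2) exp(−tr(D·K(t))/2) dt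
  = I₁(b, d_{jj}) · det(K⁰_{V∖{j},V∖{j}})^((b−2)/2) · exp(−tr(D·K⁰)/2)`,
where `K⁰ = K(c)`. -/
theorem gwishart_integrate_out_diagonal (p : ℕ) (hp : 2 ≤ p)
    (b : ℝ) (hb : 2 < b)
    (D : Matrix (Fin p) (Fin p) ℝ) (hD : D.PosDef)
    (j : Fin p) (K : Matrix (Fin p) (Fin p) ℝ) (hKsymm : K.IsSymm)
    (hKsub : (K.submatrix (fun x : {x : Fin p // x ≠ j} => x.val)
      (fun x : {x : Fin p // x ≠ j} => x.val)).PosDef) :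
    let Vj : {x : Fin p // x ≠ j} → Fin p := Subtype.val
    let Kt : ℝ → Matrix (Fin p) (Fin p) ℝ :=
      fun t l m => if l = j ∧ m = j then t else K l m
    let c : ℝ := (fun x : {x : Fin p // x ≠ j} => K j x.val) ⬝ᵥ
      ((K.submatrix Vj Vj)⁻¹ *ᵥ fun x : {x : Fin p // x ≠ j} => K x.val j)
    (∀ t : ℝ, (Kt t).PosDef ↔ c < t) ∧
      (∫ t in Set.Ioi c,
          (Kt t).det ^ ((b - 2) / 2) * Real.exp (-(1 / 2) * (D * Kt t).trace))
        = I1 b (D j j) *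
            ((Kt c).submatrix Vj Vj).det ^ ((b - 2) / 2) *
            Real.exp (-(1 / 2) * (D * Kt c).trace) := by
  intro Vj Kt c
  classical
  set A : Matrix {x : Fin p // x ≠ j} {x : Fin p // x ≠ j} ℝ :=
    K.submatrix (fun x : {x : Fin p // x ≠ j} => x.val)
      (fun x : {x : Fin p // x ≠ j} => x.val) with hAdef
  haveI : Invertible A := A.invertibleOfIsUnitDet (isUnit_iff_ne_zero.mpr hKsub.det_pos.ne')
  set B : Matrix {x : Fin p // x ≠ j} Unit ℝ := Matrix.of (fun x _ => K x.val j) with hBdef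
  let e : ({x : Fin p // x ≠ j} ⊕ Unit) ≃ Fin p :=
    { toFun := Sum.elim Subtype.val fun _ => j
      invFun := fun x => if h : x = j then Sum.inr () else Sum.inl ⟨x, h⟩
      left_inv := by
        rintro (⟨x, hx⟩ | ⟨⟩)
        · simp [hx]
        · simp
      right_inv := fun x => by by_cases h : x = j <;> simp [h] }
  have hblock : ∀ t : ℝ, Kt t =
      (Matrix.fromBlocks A B Bᴴ (Matrix.of fun _ _ => t)).submatrix e.symm e.symm := by
    intro t
    ext l m
    by_cases hl : l = j <;> by_cases hm : m = j <;>
      simp [Kt, e, hl, hm, hAdef, hBdef, hKsymm.apply]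
  -- Schur complement entry
  have hS : ∀ t : ℝ,
      ((Matrix.of fun _ _ => t) - Bᴴ * A⁻¹ * B : Matrix Unit Unit ℝ) () () = t - c := by
    intro t
    have h1 : (Bᴴ * A⁻¹ * B) () () = c := by
      simp only [c, Matrix.mul_apply, dotProduct, Matrix.mulVec, hBdef,
        Matrix.conjTranspose_apply, Matrix.of_apply, star_trivial, Finset.sum_mul,
        Finset.mul_sum]
      rw [Finset.sum_comm]
      refine Finset.sum_congr rfl fun x _ => Finset.sum_congr rfl fun y _ => ?_
      rw [hKsymm.apply j x.val]
      ring
    simp only [Matrix.sub_apply, Matrix.of_apply, h1]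
  have hdet : ∀ t : ℝ, (Kt t).det = A.det * (t - c) := by
    intro t
    rw [hblock t, Matrix.det_submatrix_equiv_self, Matrix.det_fromBlocks₁₁,
      Matrix.invOf_eq_nonsing_inv, det_unit, hS t]
  have hposdef : ∀ t : ℝ, (Kt t).PosDef ↔ c < t := by
    intro t
    rw [hblock t, posDef_iff_det, Matrix.det_submatrix_equiv_self,
      Matrix.posSemidef_submatrix_equiv,
      Matrix.PosDef.fromBlocks₁₁ B (Matrix.of fun _ _ => t) hKsub,
      posSemidef_unit_iff, Matrix.det_fromBlocks₁₁,
      Matrix.invOf_eq_nonsing_inv, det_unit, hS t]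
    constructor
    · rintro ⟨h1, h2⟩
      have h3 : t - c ≠ 0 := fun h0 => h2 (by rw [h0, mul_zero])
      have := lt_of_le_of_ne h1 (Ne.symm h3)
      linarith
    · intro h
      exact ⟨by linarith, mul_ne_zero hKsub.det_pos.ne' (by intro h0; linarith [sub_eq_zero.mp h0])⟩
  refine ⟨hposdef, ?_⟩
  -- trace identity
  have htr : ∀ t : ℝ, (D * Kt t).trace = (D * Kt c).trace + D j j * (t - c) := by
    intro t
    have hKt : Kt t = Kt c + Matrix.single j j (t - c) := by
      ext l m
      by_cases hl : l = j <;> by_cases hm : m = j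
      · rw [Matrix.add_apply]; simp [Kt, Matrix.single, Matrix.add_apply, Matrix.of_apply, hl, hm]
      · rw [Matrix.add_apply]; simp [Kt, Matrix.single, Matrix.add_apply, Matrix.of_apply, hl, hm, Ne.symm hm]
      · rw [Matrix.add_apply]; simp [Kt, Matrix.single, Matrix.add_apply, Matrix.of_apply, hl, hm, Ne.symm hl]
      · rw [Matrix.add_apply]; simp [Kt, Matrix.single, Matrix.add_apply, Matrix.of_apply, hl, hm, Ne.symm hl, Ne.symm hm]
    rw [hKt, Matrix.mul_add, Matrix.trace_add]
    congr 1
    simp [Matrix.trace, Matrix.diag, Matrix.mul_apply, Matrix.single, ite_and,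
      Finset.sum_ite_eq, mul_comm]
  -- submatrix of Kt c
  have hsub : (Kt c).submatrix Vj Vj = A := by
    ext x y
    rw [Matrix.submatrix_apply]; simp [Kt, Vj, hAdef, x.2, Matrix.submatrix_apply]
  -- the integral
  set α : ℝ := (b - 2) / 2 with hα
  have hdA : 0 < A.det := hKsub.det_pos
  set T0 : ℝ := (D * Kt c).trace with hT0
  set g : ℝ → ℝ :=
    fun s => A.det ^ α * Real.exp (-(1 / 2) * T0) * (s ^ α * Real.exp (-(D j j * s) / 2))
    with hg
  have key : ∀ t ∈ Set.Ioi c,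
      (Kt t).det ^ α * Real.exp (-(1 / 2) * (D * Kt t).trace) = g (t - c) := by
    intro t ht
    rw [hg, hdet t, htr t,
      Real.mul_rpow hdA.le (sub_nonneg.mpr (le_of_lt (Set.mem_Ioi.mp ht))),
      show -(1 / 2) * (T0 + D j j * (t - c)) = -(1 / 2) * T0 + -(D j j * (t - c)) / 2 by ring,
      Real.exp_add]
    ring
  calc (∫ t in Set.Ioi c, (Kt t).det ^ α * Real.exp (-(1 / 2) * (D * Kt t).trace))
      = ∫ t in Set.Ioi c, g (t - c) :=
        MeasureTheory.setIntegral_congr_fun measurableSet_Ioi key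
    _ = ∫ s in Set.Ioi (0:ℝ), g s := shift_Ioi g c
    _ = A.det ^ α * Real.exp (-(1 / 2) * T0) * I1 b (D j j) := by
        rw [I1, hg]
        simp only []
        rw [MeasureTheory.integral_const_mul]
    _ = I1 b (D j j) * ((Kt c).submatrix Vj Vj).det ^ α * Real.exp (-(1 / 2) * T0) := by
        rw [hsub]; ring
end

section
/- Let p ≥ 3, b > 2, let D be a real symmetric positive definite p×p matrix, and let i ≠ j in V = {1,…,p}, e = {i,j}. For (s,t) ∈ ℝ² let K(s,t) be a symmetric p×p matrix whose entries are all fixed except the (i,j) and (j,i) entries, which equal s, and the (j,j) entry, which equals t; assume K_{V∖e,V∖e} is positive definite and k_{ii} − k¹_{ii} > 0, where K¹_{ee} := K_{e,V∖e} · (K_{V∖e,V∖e})^{−1} · K_{V∖e,e} and k¹_{ii} is its (i,i) entry. Let K¹ denote the matrix K with its e×e block (entries (i,i), (i,j), (j,i), (j,j)) replaced by K¹_{ee}. Then ∫∫ over {(s,t) ∈ ℝ² : K(s,t) is positive definite} of det(K(s,t))^((b−2)/2) · exp(−(1/2)·tr(D·K(s,t))) ds dt = (2π/d_{jj})^(1/2)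 · I₁(b, d_{jj}) · (k_{ii} − k¹_{ii})^((b−1)/2) · exp(−(1/2)·(d_{ii} − d_{ij}²/d_{jj})·(k_{ii} − k¹_{ii})) · det(K_{V∖e,V∖e})^((b−2)/2) · exp(−(1/2)·tr(D·K¹)). -/
open MeasureTheory Matrix Real

section Aux
open Set
variable {m n : Type*} [Fintype m] [DecidableEq m] [Fintype n] [DecidableEq n]

lemma I1_integrand_integrable {b d : ℝ} (hb : 2 < b) (hd : 0 < d) :
    IntegrableOn (fun t => t ^ ((b - 2) / 2) * Real.exp (-(d * t) / 2)) (Set.Ioi 0) := by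
  have h := integrableOn_rpow_mul_exp_neg_mul_rpow (p := 1) (s := (b - 2) / 2) (b := d / 2)
    (by linarith) zero_lt_one (by linarith)
  refine h.congr_fun (fun x _ => ?_) measurableSet_Ioi
  beta_reduce
  rw [Real.rpow_one]
  congr 1
  ring

lemma integral_Ioi_shift (g : ℝ → ℝ) (k : ℝ) :
    ∫ y in Set.Ioi k, g y = ∫ y in Set.Ioi 0, g (y + k) := by
  rw [← integral_indicator measurableSet_Ioi, ← integral_indicator measurableSet_Ioi,
    ← integral_add_right_eq_self (fun y => (Set.Ioi k).indicator g y) k]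
  congr 1
  funext y
  simp [Set.indicator_apply, Set.mem_Ioi, lt_add_iff_pos_left]

lemma integrableOn_Ioi_shift {g : ℝ → ℝ} (k : ℝ)
    (h : IntegrableOn (fun y => g (y + k)) (Set.Ioi 0)) : IntegrableOn g (Set.Ioi k) := by
  rw [← integrable_indicator_iff measurableSet_Ioi] at h ⊢
  have h2 := h.comp_sub_right k
  refine h2.congr (Filter.Eventually.of_forall fun y => ?_)
  simp [Set.indicator_apply, Set.mem_Ioi, sub_add_cancel, lt_add_iff_pos_left,
    sub_pos]

lemma core_centered {b a dij d : ℝ} (hb : 2 < b) (ha : 0 < a) (hd : 0 < d) :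
    ∫ q : ℝ × ℝ in {q | 0 < a * q.2 - q.1 ^ 2},
        (a * q.2 - q.1 ^ 2) ^ ((b - 2) / 2) * Real.exp (-(dij * q.1) - d * q.2 / 2)
    = (2 * π / d) ^ ((1 : ℝ) / 2) * I1 b d * a ^ ((b - 1) / 2) *
        Real.exp (dij ^ 2 * a / (2 * d)) := by
  set e := (b - 2) / 2 with he_def
  have he : 0 < e := by rw [he_def]; linarith
  set f : ℝ × ℝ → ℝ :=
    fun q => (a * q.2 - q.1 ^ 2) ^ e * Real.exp (-(dij * q.1) - d * q.2 / 2) with hf_def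
  set S : Set (ℝ × ℝ) := {q | 0 < a * q.2 - q.1 ^ 2} with hS_def
  have hS : MeasurableSet S := by
    apply measurableSet_lt measurable_const
    fun_prop
  have hfc : Continuous f := by
    apply Continuous.mul
    · exact (Continuous.rpow_const (by fun_prop) (fun x => Or.inr he.le))
    · fun_prop
  -- slice description
  have hslice : ∀ x : ℝ, (fun y => S.indicator f (x, y)) =
      (Set.Ioi (x ^ 2 / a)).indicator
        (fun y => (a * y - x ^ 2) ^ e * Real.exp (-(dij * x) - d * y / 2)) := by
    intro x
    funext y
    rw [Set.indicator_apply, Set.indicator_apply]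
    have : (x, y) ∈ S ↔ y ∈ Set.Ioi (x ^ 2 / a) := by
      simp only [hS_def, Set.mem_setOf_eq, Set.mem_Ioi, sub_pos, div_lt_iff₀ ha]
      constructor <;> intro h <;> nlinarith
    simp only [this, hf_def]
  -- pointwise identity after shift
  have hpt : ∀ x : ℝ, ∀ y ∈ Set.Ioi (0 : ℝ),
      (a * (y + x ^ 2 / a) - x ^ 2) ^ e *
          Real.exp (-(dij * x) - d * (y + x ^ 2 / a) / 2) =
        (a ^ e * Real.exp (-(dij * x) - d * x ^ 2 / (2 * a))) *
          (y ^ e * Real.exp (-(d * y) / 2)) := by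
    intro x y hy
    have h1 : a * (y + x ^ 2 / a) - x ^ 2 = a * y := by field_simp; ring
    have h2 : -(dij * x) - d * (y + x ^ 2 / a) / 2 =
        (-(dij * x) - d * x ^ 2 / (2 * a)) + (-(d * y) / 2) := by field_simp; ring
    rw [h1, h2, Real.exp_add, Real.mul_rpow ha.le (le_of_lt hy)]
    ring
  -- inner integral value
  have hinner : ∀ x : ℝ, ∫ y, S.indicator f (x, y) =
      a ^ e * Real.exp (-(dij * x) - d * x ^ 2 / (2 * a)) * I1 b d := by
    intro x
    rw [hslice x, integral_indicator measurableSet_Ioi,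
      integral_Ioi_shift _ (x ^ 2 / a),
      setIntegral_congr_fun measurableSet_Ioi (fun y hy => hpt x y hy),
      integral_const_mul, I1]
  -- slice integrability
  have hslInt : ∀ x : ℝ, Integrable (fun y => S.indicator f (x, y)) := by
    intro x
    rw [hslice x, integrable_indicator_iff measurableSet_Ioi]
    apply integrableOn_Ioi_shift
    exact IntegrableOn.congr_fun ((I1_integrand_integrable hb hd).const_mul
      (a ^ e * Real.exp (-(dij * x) - d * x ^ 2 / (2 * a))))
      (fun y hy => (hpt x y hy).symm) measurableSet_Ioi
  -- nonnegativity
  have hnn : ∀ q, 0 ≤ S.indicator f q := by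
    intro q
    apply Set.indicator_nonneg
    intro q hq
    exact mul_nonneg (Real.rpow_nonneg (le_of_lt hq) e) (Real.exp_pos _).le
  -- the gaussian-type function is integrable
  have hgauss_eq : ∀ x : ℝ, Real.exp (-(dij * x) - d * x ^ 2 / (2 * a)) =
      Real.exp (dij ^ 2 * a / (2 * d)) * Real.exp (-(d / (2 * a)) * (x + a * dij / d) ^ 2) := by
    intro x
    rw [← Real.exp_add]
    congr 1
    field_simp
    ring
  have hgaussInt : Integrable (fun x : ℝ =>
      a ^ e * Real.exp (-(dij * x) - d * x ^ 2 / (2 * a)) * I1 b d) := by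
    have h0 : 0 < d / (2 * a) := by positivity
    have h1 : Integrable (fun x : ℝ => Real.exp (-(d / (2 * a)) * (x + a * dij / d) ^ 2)) :=
      (integrable_exp_neg_mul_sq h0).comp_add_right (a * dij / d)
    have h2 := (h1.const_mul (Real.exp (dij ^ 2 * a / (2 * d)))).const_mul (a ^ e)
    have h3 := h2.mul_const (I1 b d)
    refine h3.congr (Filter.Eventually.of_forall fun x => ?_)
    beta_reduce
    rw [hgauss_eq x]
  -- total integrability
  have hmeas : AEStronglyMeasurable (S.indicator f) ((volume : Measure ℝ).prod volume) := by
    rw [← Measure.volume_eq_prod]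
    exact (hfc.aestronglyMeasurable).indicator hS
  have hInt : Integrable (S.indicator f) ((volume : Measure ℝ).prod volume) := by
    rw [integrable_prod_iff hmeas]
    constructor
    · exact Filter.Eventually.of_forall hslInt
    · refine hgaussInt.congr (Filter.Eventually.of_forall fun x => ?_)
      beta_reduce
      rw [← hinner x]
      refine integral_congr_ae (Filter.Eventually.of_forall fun y => ?_)
      beta_reduce
      rw [Real.norm_eq_abs, abs_of_nonneg (hnn _)]
  -- main computation
  rw [← integral_indicator hS, Measure.volume_eq_prod, integral_prod _ hInt]
  simp only [hinner]
  have hrw : ∀ x : ℝ, a ^ e * Real.exp (-(dij * x) - d * x ^ 2 / (2 * a)) * I1 b d =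
      (a ^ e * Real.exp (dij ^ 2 * a / (2 * d)) * I1 b d) *
        Real.exp (-(d / (2 * a)) * (x + a * dij / d) ^ 2) := by
    intro x
    rw [hgauss_eq x]; ring
  simp only [hrw]
  rw [integral_const_mul, integral_add_right_eq_self
    (fun x : ℝ => Real.exp (-(d / (2 * a)) * x ^ 2)) (a * dij / d),
    integral_gaussian]
  have hsq : Real.sqrt (π / (d / (2 * a))) = (2 * π / d) ^ ((1 : ℝ) / 2) * a ^ ((1 : ℝ) / 2) := by
    rw [show π / (d / (2 * a)) = (2 * π / d) * a by field_simp,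
      Real.sqrt_mul (by positivity), Real.sqrt_eq_rpow, Real.sqrt_eq_rpow]
  rw [hsq]
  have haa : a ^ e * a ^ ((1 : ℝ) / 2) = a ^ ((b - 1) / 2) := by
    rw [← Real.rpow_add ha]
    congr 1
    rw [he_def]; ring
  calc a ^ e * Real.exp (dij ^ 2 * a / (2 * d)) * I1 b d *
        ((2 * π / d) ^ ((1 : ℝ) / 2) * a ^ ((1 : ℝ) / 2))
      = (a ^ e * a ^ ((1 : ℝ) / 2)) * Real.exp (dij ^ 2 * a / (2 * d)) * I1 b d *
        (2 * π / d) ^ ((1 : ℝ) / 2) := by ring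
    _ = _ := by rw [haa]; ring

lemma core_integral {b a dij d : ℝ} (hb : 2 < b) (ha : 0 < a) (hd : 0 < d) (c1 c2 : ℝ) :
    ∫ q : ℝ × ℝ in {q | 0 < a * (q.2 - c2) - (q.1 - c1) ^ 2},
        (a * (q.2 - c2) - (q.1 - c1) ^ 2) ^ ((b - 2) / 2) *
          Real.exp (-(dij * (q.1 - c1)) - d * (q.2 - c2) / 2)
    = (2 * π / d) ^ ((1 : ℝ) / 2) * I1 b d * a ^ ((b - 1) / 2) *
        Real.exp (dij ^ 2 * a / (2 * d)) := by
  have hS' : MeasurableSet {q : ℝ × ℝ | 0 < a * (q.2 - c2) - (q.1 - c1) ^ 2} := by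
    apply measurableSet_lt measurable_const
    fun_prop
  have hS : MeasurableSet {q : ℝ × ℝ | 0 < a * q.2 - q.1 ^ 2} := by
    apply measurableSet_lt measurable_const
    fun_prop
  rw [← integral_indicator hS']
  rw [← integral_add_right_eq_self
    (fun q => Set.indicator {q : ℝ × ℝ | 0 < a * (q.2 - c2) - (q.1 - c1) ^ 2}
      (fun q => (a * (q.2 - c2) - (q.1 - c1) ^ 2) ^ ((b - 2) / 2) *
        Real.exp (-(dij * (q.1 - c1)) - d * (q.2 - c2) / 2)) q) ((c1, c2) : ℝ × ℝ)]
  have heq : ∀ q : ℝ × ℝ,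
      Set.indicator {q : ℝ × ℝ | 0 < a * (q.2 - c2) - (q.1 - c1) ^ 2}
        (fun q => (a * (q.2 - c2) - (q.1 - c1) ^ 2) ^ ((b - 2) / 2) *
          Real.exp (-(dij * (q.1 - c1)) - d * (q.2 - c2) / 2)) (q + (c1, c2)) =
      Set.indicator {q : ℝ × ℝ | 0 < a * q.2 - q.1 ^ 2}
        (fun q => (a * q.2 - q.1 ^ 2) ^ ((b - 2) / 2) *
          Real.exp (-(dij * q.1) - d * q.2 / 2)) q := by
    intro q
    have h1 : (q + (c1, c2)).1 - c1 = q.1 := by simp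
    have h2 : (q + (c1, c2)).2 - c2 = q.2 := by simp
    rw [Set.indicator_apply, Set.indicator_apply]
    simp only [Set.mem_setOf_eq, h1, h2]
  simp only [heq]
  rw [integral_indicator hS]
  exact core_centered hb ha hd
variable {m n : Type*} [Fintype m] [DecidableEq m] [Fintype n] [DecidableEq n]

lemma posdef_submatrix_equiv {M : Matrix n n ℝ} (hM : M.PosDef) (e : m ≃ n) :
    (M.submatrix e e).PosDef := by
  refine PosDef.of_dotProduct_mulVec_pos (hM.1.submatrix e) fun x hx => ?_
  have key : star x ⬝ᵥ (M.submatrix e e) *ᵥ x =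
      star (fun k => x (e.symm k)) ⬝ᵥ M *ᵥ (fun k => x (e.symm k)) := by
    simp only [dotProduct, mulVec, submatrix_apply, Pi.star_apply]
    rw [← Equiv.sum_comp e
      (fun k' => star (x (e.symm k')) * ∑ l', M k' l' * x (e.symm l'))]
    refine Finset.sum_congr rfl fun k _ => ?_
    rw [Equiv.symm_apply_apply]
    congr 1
    rw [← Equiv.sum_comp e (fun l' => M (e k) l' * x (e.symm l'))]
    refine Finset.sum_congr rfl fun l _ => ?_
    rw [Equiv.symm_apply_apply]
  rw [key]
  apply hM.dotProduct_mulVec_pos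
  intro h0
  apply hx
  funext k
  have := congrFun h0 (e k)
  simpa using this

open scoped Matrix in
lemma posdef_fromBlocks₂₂ (A : Matrix m m ℝ) (B : Matrix m n ℝ)
    {Dm : Matrix n n ℝ} (hA : A.IsHermitian) (hD : Dm.PosDef) [Invertible Dm] :
    (fromBlocks A B Bᴴ Dm).PosDef ↔ (A - B * Dm⁻¹ * Bᴴ).PosDef := by
  have hSherm : (A - B * Dm⁻¹ * Bᴴ).IsHermitian := by
    apply hA.sub
    unfold Matrix.IsHermitian
    rw [conjTranspose_mul, conjTranspose_mul, conjTranspose_conjTranspose,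
      conjTranspose_nonsing_inv, hD.1.eq, Matrix.mul_assoc]
  constructor
  · intro h
    refine PosDef.of_dotProduct_mulVec_pos hSherm fun x hx => ?_
    have hz : (Sum.elim x (-((Dm⁻¹ * Bᴴ) *ᵥ x)) : m ⊕ n → ℝ) ≠ 0 := by
      intro h0
      apply hx
      funext k
      have := congrFun h0 (Sum.inl k)
      simpa using this
    have hq := h.dotProduct_mulVec_pos hz
    rw [dotProduct_mulVec, schur_complement_eq₂₂ A B _ _ hD.1] at hq
    simp only [mulVec_neg, add_neg_cancel, neg_add_cancel, star_zero, zero_dotProduct,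
      vecMul_zero, Matrix.zero_mul] at hq
    rw [dotProduct_mulVec]
    convert hq using 2
    simp
  · intro h
    have hherm : (fromBlocks A B Bᴴ Dm).IsHermitian := by
      unfold Matrix.IsHermitian
      rw [fromBlocks_conjTranspose, hA.eq, hD.1.eq, conjTranspose_conjTranspose]
    refine PosDef.of_dotProduct_mulVec_pos hherm fun z hz => ?_
    have hz' : z = Sum.elim (z ∘ Sum.inl) (z ∘ Sum.inr) := by
      funext k; cases k <;> rfl
    rw [dotProduct_mulVec, hz', schur_complement_eq₂₂ A B _ _ hD.1]
    have term2 : 0 ≤ star (z ∘ Sum.inl) ᵥ* (A - B * Dm⁻¹ * Bᴴ) ⬝ᵥ (z ∘ Sum.inl) := by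
      rw [← dotProduct_mulVec]
      exact h.posSemidef.dotProduct_mulVec_nonneg _
    have term1 : 0 ≤ star ((Dm⁻¹ * Bᴴ) *ᵥ (z ∘ Sum.inl) + z ∘ Sum.inr) ᵥ* Dm ⬝ᵥ
        ((Dm⁻¹ * Bᴴ) *ᵥ (z ∘ Sum.inl) + z ∘ Sum.inr) := by
      rw [← dotProduct_mulVec]
      exact hD.posSemidef.dotProduct_mulVec_nonneg _
    by_cases hx : (z ∘ Sum.inl) = 0
    · have hy : (z ∘ Sum.inr) ≠ 0 := by
        intro h0
        apply hz
        funext k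
        cases k with
        | inl k => exact congrFun hx k
        | inr k => exact congrFun h0 k
      have t1pos : 0 < star ((Dm⁻¹ * Bᴴ) *ᵥ (z ∘ Sum.inl) + z ∘ Sum.inr) ᵥ* Dm ⬝ᵥ
          ((Dm⁻¹ * Bᴴ) *ᵥ (z ∘ Sum.inl) + z ∘ Sum.inr) := by
        rw [← dotProduct_mulVec]
        apply hD.dotProduct_mulVec_pos
        rw [hx, mulVec_zero, zero_add]
        exact hy
      have t2 : star (z ∘ Sum.inl) ᵥ* (A - B * Dm⁻¹ * Bᴴ) ⬝ᵥ (z ∘ Sum.inl) = 0 := by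
        rw [hx]; simp
      rw [t2] at *
      linarith
    · have t2pos : 0 < star (z ∘ Sum.inl) ᵥ* (A - B * Dm⁻¹ * Bᴴ) ⬝ᵥ (z ∘ Sum.inl) := by
        rw [← dotProduct_mulVec]
        exact h.dotProduct_mulVec_pos hx
      linarith

lemma posdef_fin_two_iff {S : Matrix (Fin 2) (Fin 2) ℝ} (hsym : S 1 0 = S 0 1)
    (ha : 0 < S 0 0) : S.PosDef ↔ 0 < S.det := by
  constructor
  · exact fun h => h.det_pos
  · intro hdet
    rw [Matrix.det_fin_two, hsym] at hdet
    refine PosDef.of_dotProduct_mulVec_pos ?_ ?_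
    · unfold Matrix.IsHermitian
      ext k l
      fin_cases k <;> fin_cases l <;>
        simp [conjTranspose_apply, hsym]
    · intro x hx
      have hx01 : x 0 ≠ 0 ∨ x 1 ≠ 0 := by
        by_contra h0
        push_neg at h0
        apply hx
        funext k
        fin_cases k <;> simp [h0.1, h0.2]
      simp only [dotProduct, mulVec, Fin.sum_univ_two, Pi.star_apply, star_trivial, hsym]
      by_cases h1 : x 1 = 0
      · have h0 : x 0 ≠ 0 := by
          rcases hx01 with h | h
          · exact h
          · exact absurd h1 h
        rw [h1]
        nlinarith [mul_pos ha (mul_self_pos.mpr h0)]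
      · nlinarith [sq_nonneg (S 0 0 * x 0 + S 0 1 * x 1),
          mul_pos hdet (mul_self_pos.mpr h1)]

lemma posdef_diag_pos {M : Matrix n n ℝ} (hM : M.PosDef) (k : n) : 0 < M k k := by
  have := hM.dotProduct_mulVec_pos (x := Pi.single k 1) (by
    intro h
    have := congrFun h k
    simp at this)
  simpa [dotProduct, mulVec, Pi.single_apply, Finset.mul_sum] using this

lemma trace_mul_diff {P : Type*} [Fintype P] [DecidableEq P]
    (D N N' : Matrix P P ℝ) (i j : P) (hij : i ≠ j)
    (h : ∀ l m : P, (m ≠ i ∧ m ≠ j) ∨ (l ≠ i ∧ l ≠ j) → N m l = N' m l) :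
    (D * N).trace = (D * N').trace +
      (D i i * (N i i - N' i i) + D i j * (N j i - N' j i) +
        D j i * (N i j - N' i j) + D j j * (N j j - N' j j)) := by
  have expand : ∀ X : Matrix P P ℝ, (D * X).trace = ∑ l, ∑ m, D l m * X m l := by
    intro X
    simp [Matrix.trace, Matrix.mul_apply, Matrix.diag]
  rw [expand, expand]
  have key : ∑ l, ∑ m, (D l m * N m l - D l m * N' m l) =
      ∑ l ∈ ({i, j} : Finset P), ∑ m ∈ ({i, j} : Finset P),
        (D l m * N m l - D l m * N' m l) := by
    rw [← Finset.sum_subset (Finset.subset_univ ({i, j} : Finset P))]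
    · refine Finset.sum_congr rfl fun l hl => ?_
      rw [← Finset.sum_subset (Finset.subset_univ ({i, j} : Finset P))]
      intro m _ hm
      simp only [Finset.mem_insert, Finset.mem_singleton, not_or] at hm
      rw [h l m (Or.inl ⟨hm.1, hm.2⟩)]
      ring
    · intro l _ hl
      simp only [Finset.mem_insert, Finset.mem_singleton, not_or] at hl
      refine Finset.sum_eq_zero fun m _ => ?_
      rw [h l m (Or.inr ⟨hl.1, hl.2⟩)]
      ring
  have lhs_eq : ∑ l, ∑ m, D l m * N m l =
      ∑ l, ∑ m, D l m * N' m l + ∑ l, ∑ m, (D l m * N m l - D l m * N' m l) := by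
    rw [← Finset.sum_add_distrib]
    refine Finset.sum_congr rfl fun l _ => ?_
    rw [← Finset.sum_add_distrib]
    refine Finset.sum_congr rfl fun m _ => ?_
    ring
  rw [lhs_eq, key, Finset.sum_pair hij]
  rw [Finset.sum_pair hij, Finset.sum_pair hij]
  ring

def eqvIJ {p : ℕ} (i j : Fin p) (hij : i ≠ j) :
    (Fin 2 ⊕ {x : Fin p // x ≠ i ∧ x ≠ j}) ≃ Fin p where
  toFun := Sum.elim ![i, j] Subtype.val
  invFun := fun y => if h1 : y = i then Sum.inl 0 else if h2 : y = j then Sum.inl 1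
    else Sum.inr ⟨y, h1, h2⟩
  left_inv := by
    rintro (a | x)
    · fin_cases a
      · simp
      · simp [hij.symm, hij]
    · simp [x.2.1, x.2.2]
  right_inv := by
    intro y
    by_cases h1 : y = i
    · simp [h1]
    · by_cases h2 : y = j
      · simp [h1, h2, hij.symm]
      · simp [h1, h2]

lemma posdef_submatrix_equiv_iff {M : Matrix n n ℝ} (e : m ≃ n) :
    (M.submatrix e e).PosDef ↔ M.PosDef := by
  constructor
  · intro h
    have h2 := posdef_submatrix_equiv h e.symm
    rwa [Matrix.submatrix_submatrix, Equiv.self_comp_symm, Matrix.submatrix_id_id] at h2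
  · intro h
    exact posdef_submatrix_equiv h e

end Aux

/-- Integrating the entries `(k_{ij}, k_{jj})` out of the G-Wishart density
(equation (6) of the paper): the double integral over the region where `K(s,t)` is
positive definite of the unnormalized G-Wishart density equals
`J(b, D_{ee}, K) · det(K_{V∖e,V∖e})^((b−2)/2) · exp(−tr(D·K¹)/2)`. -/
theorem gwishart_integrate_out_edge (p : ℕ) (hp : 3 ≤ p)
    (b : ℝ) (hb : 2 < b)
    (D : Matrix (Fin p) (Fin p) ℝ) (hD : D.PosDef)
    (i j : Fin p) (hij : i ≠ j)
    (K : Matrix (Fin p) (Fin p) ℝ) (hKsymm : K.IsSymm)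
    (hKsub : (K.submatrix (fun x : {x : Fin p // x ≠ i ∧ x ≠ j} => x.val)
      (fun x : {x : Fin p // x ≠ i ∧ x ≠ j} => x.val)).PosDef)
    (hkii : 0 <
      K i i -
        (K.submatrix ![i, j] (fun x : {x : Fin p // x ≠ i ∧ x ≠ j} => x.val) *
          (K.submatrix (fun x : {x : Fin p // x ≠ i ∧ x ≠ j} => x.val)
            (fun x : {x : Fin p // x ≠ i ∧ x ≠ j} => x.val))⁻¹ *
          K.submatrix (fun x : {x : Fin p // x ≠ i ∧ x ≠ j} => x.val) ![i, j]) 0 0) :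
    let Vee : {x : Fin p // x ≠ i ∧ x ≠ j} → Fin p := Subtype.val
    let K1ee : Matrix (Fin 2) (Fin 2) ℝ :=
      K.submatrix ![i, j] Vee * (K.submatrix Vee Vee)⁻¹ * K.submatrix Vee ![i, j]
    let K1 : Matrix (Fin p) (Fin p) ℝ := fun l m =>
      if l = i ∧ m = i then K1ee 0 0
      else if l = i ∧ m = j then K1ee 0 1
      else if l = j ∧ m = i then K1ee 1 0
      else if l = j ∧ m = j then K1ee 1 1
      else K l m
    let Kst : ℝ → ℝ → Matrix (Fin p) (Fin p) ℝ := fun s t l m =>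
      if l = j ∧ m = j then t
      else if (l = i ∧ m = j) ∨ (l = j ∧ m = i) then s
      else K l m
    (∫ q in {q : ℝ × ℝ | (Kst q.1 q.2).PosDef},
        (Kst q.1 q.2).det ^ ((b - 2) / 2) *
          Real.exp (-(1 / 2) * (D * Kst q.1 q.2).trace))
      = (2 * π / D j j) ^ ((1 : ℝ) / 2) * I1 b (D j j) *
          (K i i - K1ee 0 0) ^ ((b - 1) / 2) *
          Real.exp (-(1 / 2) * (D i i - D i j ^ 2 / D j j) * (K i i - K1ee 0 0)) *
          (K.submatrix Vee Vee).det ^ ((b - 2) / 2) *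
          Real.exp (-(1 / 2) * (D * K1).trace) := by
  intro Vee K1ee K1 Kst
  -- basic abbreviations
  have ha : 0 < K i i - K1ee 0 0 := hkii
  have hdjj : 0 < D j j := posdef_diag_pos hD j
  have hDsym : D j i = D i j := by
    have h1 := congrFun (congrFun hD.1 j) i
    simpa using h1.symm
  have hM : (K.submatrix Vee Vee).PosDef := hKsub
  haveI : Invertible (K.submatrix Vee Vee) :=
    (K.submatrix Vee Vee).invertibleOfIsUnitDet (isUnit_iff_ne_zero.mpr hM.det_pos.ne')
  have hBC : K.submatrix Vee ![i, j] = (K.submatrix ![i, j] Vee)ᵀ := by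
    ext x a
    simp only [Matrix.submatrix_apply, Matrix.transpose_apply]
    exact (hKsymm.apply _ _).symm
  have hMsym : (K.submatrix Vee Vee)ᵀ = K.submatrix Vee Vee := by
    ext x y
    simp only [Matrix.transpose_apply, Matrix.submatrix_apply]
    exact hKsymm.apply _ _
  have hq : K.submatrix ![i, j] Vee * (K.submatrix Vee Vee)⁻¹ *
      (K.submatrix ![i, j] Vee)ᵀ = K1ee := by
    rw [← hBC]
  have hQsymm : K1ee 1 0 = K1ee 0 1 := by
    have h1 : K1eeᵀ = K1ee := by
      rw [show K1ee = K.submatrix ![i, j] Vee * (K.submatrix Vee Vee)⁻¹ *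
        K.submatrix Vee ![i, j] from rfl]
      rw [hBC, Matrix.transpose_mul, Matrix.transpose_mul, Matrix.transpose_transpose,
        Matrix.transpose_nonsing_inv, hMsym, Matrix.mul_assoc]
    exact congrFun (congrFun h1 0) 1
  -- block structure
  have hblock : ∀ s t : ℝ, (Kst s t).submatrix (eqvIJ i j hij) (eqvIJ i j hij) =
      fromBlocks (!![K i i, s; s, t]) (K.submatrix ![i, j] Vee)
        (K.submatrix ![i, j] Vee)ᴴ (K.submatrix Vee Vee) := by
    intro s t
    ext u v
    have hconj : (K.submatrix ![i, j] Vee)ᴴ = (K.submatrix ![i, j] Vee)ᵀ := by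
      ext x y; rw [Matrix.conjTranspose_apply, Matrix.transpose_apply, star_trivial]
    rw [hconj, Matrix.submatrix_apply]
    cases u with
    | inl a =>
      cases v with
      | inl c =>
        fin_cases a <;> fin_cases c <;>
          simp [eqvIJ, Kst, fromBlocks, hij, hij.symm]
      | inr x =>
        fin_cases a <;>
          simp [eqvIJ, Kst, fromBlocks, x.2.1, x.2.2, hij, Vee]
    | inr x =>
      cases v with
      | inl c =>
        fin_cases c <;>
          simp [eqvIJ, Kst, fromBlocks, x.2.1, x.2.2, hij, hKsymm.apply, Vee] <;> rfl
      | inr y =>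
        simp [eqvIJ, Kst, fromBlocks, x.2.1, x.2.2, y.2.1, y.2.2, Vee]
  -- Schur complement entries
  have hSchur : ∀ s t : ℝ, (!![K i i, s; s, t] - K.submatrix ![i, j] Vee *
      (K.submatrix Vee Vee)⁻¹ * (K.submatrix ![i, j] Vee)ᵀ) =
      !![K i i - K1ee 0 0, s - K1ee 0 1; s - K1ee 0 1, t - K1ee 1 1] := by
    intro s t
    rw [hq]
    ext u v
    fin_cases u <;> fin_cases v <;>
      simp [Matrix.sub_apply, hQsymm]
  have hconj : (K.submatrix ![i, j] Vee)ᴴ = (K.submatrix ![i, j] Vee)ᵀ := by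
    ext x y; rw [Matrix.conjTranspose_apply, Matrix.transpose_apply, star_trivial]
  -- determinant identity
  have hdet : ∀ s t : ℝ, (Kst s t).det = (K.submatrix Vee Vee).det *
      ((K i i - K1ee 0 0) * (t - K1ee 1 1) - (s - K1ee 0 1) ^ 2) := by
    intro s t
    rw [← Matrix.det_submatrix_equiv_self (eqvIJ i j hij), hblock s t,
      Matrix.det_fromBlocks₂₂, Matrix.invOf_eq_nonsing_inv, hconj, hSchur s t]
    congr 1
    rw [Matrix.det_fin_two]
    simp [Matrix.of_apply]
    ring
  -- positive-definiteness description
  have hset : {q : ℝ × ℝ | (Kst q.1 q.2).PosDef} =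
      {q : ℝ × ℝ | 0 < (K i i - K1ee 0 0) * (q.2 - K1ee 1 1) - (q.1 - K1ee 0 1) ^ 2} := by
    ext q
    obtain ⟨s, t⟩ := q
    simp only [Set.mem_setOf_eq]
    rw [← posdef_submatrix_equiv_iff (eqvIJ i j hij), hblock s t,
      posdef_fromBlocks₂₂ _ _ (by
        ext u v
        fin_cases u <;> fin_cases v <;> simp [Matrix.conjTranspose_apply]) hM,
      hconj, hSchur s t]
    rw [posdef_fin_two_iff (by simp) (by simpa using ha)]
    rw [Matrix.det_fin_two]
    simp only [Matrix.of_apply, Matrix.cons_val', Matrix.cons_val_zero, Matrix.cons_val_one,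
      Matrix.head_cons, Matrix.head_fin_const, Matrix.empty_val', Matrix.cons_val_fin_one]
    constructor <;> intro h <;> nlinarith
  -- trace identity
  have htrace : ∀ s t : ℝ, (D * Kst s t).trace = (D * K1).trace +
      (D i i * (K i i - K1ee 0 0) + D i j * (s - K1ee 1 0) +
        D j i * (s - K1ee 0 1) + D j j * (t - K1ee 1 1)) := by
    intro s t
    rw [trace_mul_diff D (Kst s t) K1 i j hij (by
      intro l m hc
      rcases hc with ⟨h1, h2⟩ | ⟨h1, h2⟩ <;> simp [Kst, K1, h1, h2])]
    congr 1
    simp [Kst, K1, hij, hij.symm]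
  -- assembling
  set a := K i i - K1ee 0 0 with ha_def
  set c1 := K1ee 0 1 with hc1_def
  set c2 := K1ee 1 1 with hc2_def
  set C0 : ℝ := (K.submatrix Vee Vee).det ^ ((b - 2) / 2) *
      Real.exp (-(1 / 2) * (D * K1).trace) *
      Real.exp (-(1 / 2) * D i i * a) with hC0_def
  have hS' : MeasurableSet {q : ℝ × ℝ | 0 < a * (q.2 - c2) - (q.1 - c1) ^ 2} := by
    apply measurableSet_lt measurable_const
    fun_prop
  rw [hset]
  have hcong : (∫ q in {q : ℝ × ℝ | 0 < a * (q.2 - c2) - (q.1 - c1) ^ 2},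
        (Kst q.1 q.2).det ^ ((b - 2) / 2) *
          Real.exp (-(1 / 2) * (D * Kst q.1 q.2).trace))
      = ∫ q in {q : ℝ × ℝ | 0 < a * (q.2 - c2) - (q.1 - c1) ^ 2},
          C0 * ((a * (q.2 - c2) - (q.1 - c1) ^ 2) ^ ((b - 2) / 2) *
            Real.exp (-(D i j * (q.1 - c1)) - D j j * (q.2 - c2) / 2)) := by
    refine setIntegral_congr_fun hS' (fun q hq => ?_)
    have hqpos : 0 < a * (q.2 - c2) - (q.1 - c1) ^ 2 := hq
    rw [hdet q.1 q.2, htrace q.1 q.2, Real.mul_rpow hM.det_pos.le hqpos.le]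
    rw [hDsym, hQsymm]
    rw [show -(1 / 2) * ((D * K1).trace +
        (D i i * a + D i j * (q.1 - c1) + D i j * (q.1 - c1) + D j j * (q.2 - c2))) =
        (-(1 / 2) * (D * K1).trace) + ((-(1 / 2) * D i i * a) +
          (-(D i j * (q.1 - c1)) - D j j * (q.2 - c2) / 2)) from by ring]
    rw [Real.exp_add, Real.exp_add, hC0_def]
    ring
  rw [hcong, integral_const_mul, core_integral hb ha hdjj c1 c2]
  have hexp : Real.exp (-(1 / 2) * D i i * a) * Real.exp (D i j ^ 2 * a / (2 * D j j)) =
      Real.exp (-(1 / 2) * (D i i - D i j ^ 2 / D j j) * a) := by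
    rw [← Real.exp_add]
    congr 1
    field_simp
    ring
  calc C0 * ((2 * π / D j j) ^ ((1 : ℝ) / 2) * I1 b (D j j) * a ^ ((b - 1) / 2) *
        Real.exp (D i j ^ 2 * a / (2 * D j j)))
      = (2 * π / D j j) ^ ((1 : ℝ) / 2) * I1 b (D j j) * a ^ ((b - 1) / 2) *
          (Real.exp (-(1 / 2) * D i i * a) * Real.exp (D i j ^ 2 * a / (2 * D j j))) *
          (K.submatrix Vee Vee).det ^ ((b - 2) / 2) *
          Real.exp (-(1 / 2) * (D * K1).trace) := by
        rw [hC0_def]; ring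
    _ = _ := by rw [hexp]
end

section
/- Let p ≥ 3, b > 2, let D be a real symmetric positive definite p×p matrix, let K be a real symmetric positive definite p×p matrix, let i ≠ j in V = {1,…,p}, e = {i,j}. Let K¹_{ee} := K_{e,V∖e} · (K_{V∖e,V∖e})^{−1} · K_{V∖e,e} with (i,i) entry k¹_{ii}, and let K¹ be K with its e×e block replaced by K¹_{ee}. Let K̃ be K with the (i,j) and (j,i) entries set to 0, let c := K̃_{j,V∖{j}} · (K_{V∖{j},V∖{j}})^{−1} · K̃_{V∖{j},j}, and let K⁰ be K̃ with the (j,j) entry set to c. Then the ratio [I₁(b, d_{jj}) · det(K⁰_{V∖{j},V∖{j}})^((b−2)/2) · exp(−(1/2)·tr(D·K⁰))] / [(2π/d_{jj})^(1/2) · I₁(b, d_{jj}) · (k_{ii} − k¹_{ii})^((b−1)/2) · exp(−(1/2)·(d_{ii} − d_{ij}²/d_{jj})·(k_{ii} − k¹_{ii})) · det(K_{V∖e,V∖e})^((b−2)/2) · exp(−(1/2)·tr(D·K¹))] equals H(K, D, e) := (d_{jj} / (2π·(k_{ii} − k¹_{ii})))^(1/2) · exp{−(1/2)·[tr(D·(K⁰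 − K¹)) − (d_{ii} − d_{ij}²/d_{jj})·(k_{ii} − k¹_{ii})]}. -/
open MeasureTheory Matrix Real

lemma posDef_submatrix_subtype {n : Type*} [Fintype n] [DecidableEq n]
    {K : Matrix n n ℝ} (hK : K.PosDef) (P : n → Prop) [DecidablePred P] :
    (K.submatrix (Subtype.val : {x // P x} → n) Subtype.val).PosDef := by
  refine Matrix.PosDef.of_dotProduct_mulVec_pos (hK.1.submatrix _) fun x hx => ?_
  classical
  set y : n → ℝ := fun l => if h : P l then x ⟨l, h⟩ else 0 with hy
  have hyne : y ≠ 0 := by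
    intro h
    apply hx
    funext a
    have := congrFun h a.val
    simpa [y, a.2] using this
  have h2 : ∀ l : n, ∑ m, K l m * y m = ∑ m : {x // P x}, K l m.val * x m := by
    intro l
    rw [← Fintype.sum_subtype_add_sum_subtype P (fun m => K l m * y m)]
    simp [y, fun (a : {x // P x}) => a.2, fun (a : {x // ¬ P x}) => a.2]
  have key : star y ⬝ᵥ (K *ᵥ y) =
      star x ⬝ᵥ ((K.submatrix (Subtype.val : {x // P x} → n) Subtype.val) *ᵥ x) := by
    simp only [star_trivial, dotProduct, mulVec, Matrix.submatrix_apply]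
    simp only [h2]
    rw [← Fintype.sum_subtype_add_sum_subtype P
      (fun l => y l * ∑ m : {x // P x}, K l m.val * x m)]
    simp [y, h2, fun (a : {x // P x}) => a.2, fun (a : {x // ¬ P x}) => a.2]
  rw [← key]
  exact hK.dotProduct_mulVec_pos hyne

lemma I1_pos {b d : ℝ} (hb : 2 < b) (hd : 0 < d) : 0 < I1 b d := by
  rw [I1]
  have hint : IntegrableOn (fun t : ℝ => t ^ ((b - 2) / 2) * Real.exp (-(d * t) / 2))
      (Set.Ioi 0) := by
    have h := integrableOn_rpow_mul_exp_neg_mul_rpow (s := (b - 2) / 2) (p := 1) (b := d / 2)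
      (by linarith) one_pos (by positivity)
    refine h.congr_fun (fun t ht => ?_) measurableSet_Ioi
    simp only [Real.rpow_one]
    ring_nf
  rw [setIntegral_pos_iff_support_of_nonneg_ae ?_ hint]
  · have hsub : Set.Ioi (0:ℝ) ⊆
        Function.support (fun t : ℝ => t ^ ((b - 2) / 2) * Real.exp (-(d * t) / 2)) ∩
          Set.Ioi 0 := by
      intro t ht
      have ht' : (0:ℝ) < t := ht
      have : (0:ℝ) < t ^ ((b - 2) / 2) * Real.exp (-(d * t) / 2) := by positivity
      exact ⟨this.ne', ht⟩
    refine lt_of_lt_of_le ?_ (measure_mono hsub)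
    simp [Real.volume_Ioi]
  · filter_upwards [ae_restrict_mem measurableSet_Ioi] with t ht
    have : (0:ℝ) < t := ht
    positivity


lemma ratio_algebra {I Δ a dj w t0 t1 b : ℝ} (hI : 0 < I) (hΔ : 0 < Δ) (ha : 0 < a)
    (hdj : 0 < dj) :
    (I * (Δ * a) ^ ((b - 2) / 2) * Real.exp (-(1 / 2) * t0)) /
      ((2 * π / dj) ^ ((1 : ℝ) / 2) * I * a ^ ((b - 1) / 2) *
        Real.exp (-(1 / 2) * w * a) * Δ ^ ((b - 2) / 2) * Real.exp (-(1 / 2) * t1))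
      = (dj / (2 * π * a)) ^ ((1 : ℝ) / 2) *
          Real.exp (-(1 / 2) * ((t0 - t1) - w * a)) := by
  have hπ : (0:ℝ) < π := Real.pi_pos
  have hden : 0 < (2 * π / dj) ^ ((1 : ℝ) / 2) * I * a ^ ((b - 1) / 2) *
        Real.exp (-(1 / 2) * w * a) * Δ ^ ((b - 2) / 2) * Real.exp (-(1 / 2) * t1) := by
    positivity
  rw [div_eq_iff hden.ne']
  have h1 : (Δ * a) ^ ((b - 2) / 2) = Δ ^ ((b - 2) / 2) * a ^ ((b - 2) / 2) :=
    Real.mul_rpow hΔ.le ha.le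
  have h2 : (dj / (2 * π * a)) ^ ((1 : ℝ) / 2) * (2 * π / dj) ^ ((1 : ℝ) / 2)
      = a⁻¹ ^ ((1 : ℝ) / 2) := by
    rw [← Real.mul_rpow (by positivity) (by positivity)]
    congr 1
    field_simp
  have h3 : a ^ ((b - 2) / 2) = a⁻¹ ^ ((1 : ℝ) / 2) * a ^ ((b - 1) / 2) := by
    rw [Real.inv_rpow ha.le, ← Real.rpow_neg ha.le, ← Real.rpow_add ha]
    congr 1
    ring
  have h4 : Real.exp (-(1 / 2) * t0) = Real.exp (-(1 / 2) * ((t0 - t1) - w * a)) *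
      Real.exp (-(1 / 2) * w * a) * Real.exp (-(1 / 2) * t1) := by
    rw [← Real.exp_add, ← Real.exp_add]
    congr 1
    ring
  rw [h1, h3, h4]
  linear_combination (-(I) * Δ ^ ((b - 2) / 2) * a ^ ((b - 1) / 2) *
    (Real.exp (-(1 / 2) * ((t0 - t1) - w * a)) * Real.exp (-(1 / 2) * w * a) *
      Real.exp (-(1 / 2) * t1))) * h2


/-- The ratio of the integrated-out G-Wishart factors for the graphs `G^{−e}` and `G`
collapses to the explicit function `H(K,D,e)` (equations (7)–(8) of the paper). -/
theorem gwishart_ratio_eq_H (p : ℕ) (hp : 3 ≤ p)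
    (b : ℝ) (hb : 2 < b)
    (D : Matrix (Fin p) (Fin p) ℝ) (hD : D.PosDef)
    (K : Matrix (Fin p) (Fin p) ℝ) (hK : K.PosDef)
    (i j : Fin p) (hij : i ≠ j) :
    let Vee : {x : Fin p // x ≠ i ∧ x ≠ j} → Fin p := Subtype.val
    let Vj : {x : Fin p // x ≠ j} → Fin p := Subtype.val
    let K1ee : Matrix (Fin 2) (Fin 2) ℝ :=
      K.submatrix ![i, j] Vee * (K.submatrix Vee Vee)⁻¹ * K.submatrix Vee ![i, j]
    let K1 : Matrix (Fin p) (Fin p) ℝ := fun l m =>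
      if l = i ∧ m = i then K1ee 0 0
      else if l = i ∧ m = j then K1ee 0 1
      else if l = j ∧ m = i then K1ee 1 0
      else if l = j ∧ m = j then K1ee 1 1
      else K l m
    let Ktil : Matrix (Fin p) (Fin p) ℝ := fun l m =>
      if (l = i ∧ m = j) ∨ (l = j ∧ m = i) then 0 else K l m
    let c : ℝ := (fun x : {x : Fin p // x ≠ j} => Ktil j x.val) ⬝ᵥ
      ((K.submatrix Vj Vj)⁻¹ *ᵥ fun x : {x : Fin p // x ≠ j} => Ktil x.val j)
    let K0 : Matrix (Fin p) (Fin p) ℝ := fun l m =>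
      if l = j ∧ m = j then c else Ktil l m
    (I1 b (D j j) * (K0.submatrix Vj Vj).det ^ ((b - 2) / 2) *
        Real.exp (-(1 / 2) * (D * K0).trace)) /
      ((2 * π / D j j) ^ ((1 : ℝ) / 2) * I1 b (D j j) *
        (K i i - K1ee 0 0) ^ ((b - 1) / 2) *
        Real.exp (-(1 / 2) * (D i i - D i j ^ 2 / D j j) * (K i i - K1ee 0 0)) *
        (K.submatrix Vee Vee).det ^ ((b - 2) / 2) *
        Real.exp (-(1 / 2) * (D * K1).trace))
      = (D j j / (2 * π * (K i i - K1ee 0 0))) ^ ((1 : ℝ) / 2) *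
          Real.exp (-(1 / 2) *
            ((D * (K0 - K1)).trace -
              (D i i - D i j ^ 2 / D j j) * (K i i - K1ee 0 0))) := by
  intro Vee Vj K1ee K1 Ktil c K0
  classical
  have hVee : (K.submatrix Vee Vee).PosDef :=
    posDef_submatrix_subtype hK (fun x => x ≠ i ∧ x ≠ j)
  have hVj : (K.submatrix Vj Vj).PosDef :=
    posDef_submatrix_subtype hK (fun x => x ≠ j)
  haveI : Invertible (K.submatrix Vee Vee) :=
    Matrix.invertibleOfIsUnitDet _ hVee.det_pos.ne'.isUnit
  -- the reindexing equivalence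
  let e : Fin 1 ⊕ {x : Fin p // x ≠ i ∧ x ≠ j} ≃ {x : Fin p // x ≠ j} :=
    { toFun := Sum.elim (fun _ => ⟨i, hij⟩) (fun a => ⟨a.1, a.2.2⟩)
      invFun := fun a => if h : a.1 = i then Sum.inl 0 else Sum.inr ⟨a.1, h, a.2⟩
      left_inv := by
        rintro (x | a)
        · simp [Subsingleton.elim (0 : Fin 1) x]
        · simp [a.2.1]
      right_inv := by
        rintro ⟨a, ha⟩
        by_cases h : a = i
        · subst h; simp
        · simp [h] }
  have hblock : (K.submatrix Vj Vj).submatrix e e =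
      Matrix.fromBlocks (Matrix.of fun _ _ => K i i)
        (Matrix.of fun _ (m : {x : Fin p // x ≠ i ∧ x ≠ j}) => K i m.1)
        (Matrix.of fun (l : {x : Fin p // x ≠ i ∧ x ≠ j}) _ => K l.1 i)
        (K.submatrix Vee Vee) := by
    ext a b
    cases a <;> cases b <;> rfl
  have hentry : K1ee 0 0 = ((Matrix.of fun _ (m : {x : Fin p // x ≠ i ∧ x ≠ j}) => K i m.1) *
      (K.submatrix Vee Vee)⁻¹ *
      (Matrix.of fun (l : {x : Fin p // x ≠ i ∧ x ≠ j}) _ => K l.1 i)) 0 0 := by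
    simp [K1ee, Matrix.mul_apply]
    rfl
  have hdet : (K.submatrix Vj Vj).det = (K.submatrix Vee Vee).det * (K i i - K1ee 0 0) := by
    rw [← Matrix.det_submatrix_equiv_self e, hblock, Matrix.det_fromBlocks₂₂]
    congr 1
    rw [Matrix.det_fin_one, Matrix.invOf_eq_nonsing_inv]
    rw [hentry]
    rfl
  have ha : 0 < K i i - K1ee 0 0 := by
    have h := hVj.det_pos
    rw [hdet] at h
    nlinarith [hVee.det_pos]
  have hK0sub : K0.submatrix Vj Vj = K.submatrix Vj Vj := by
    ext a b
    rw [Matrix.submatrix_apply, Matrix.submatrix_apply]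
    simp only [Matrix.submatrix_apply, K0, Ktil]
    rw [if_neg (by rintro ⟨h1, h2⟩; exact b.2 h2), if_neg]
    rintro (⟨h1, h2⟩ | ⟨h1, h2⟩)
    · exact b.2 h2
    · exact a.2 h1
  have hdj : 0 < D j j := by
    have h := hD.dotProduct_mulVec_pos (x := Pi.single j 1) (by
      intro h
      have := congrFun h j
      simp at this)
    simpa [dotProduct, mulVec, Pi.single_apply, Finset.sum_ite_eq', ite_mul, mul_ite] using h
  have htr : (D * (K0 - K1)).trace = (D * K0).trace - (D * K1).trace := by
    rw [Matrix.mul_sub, Matrix.trace_sub]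
  have hI : 0 < I1 b (D j j) := I1_pos hb hdj
  rw [hK0sub, hdet, htr]
  exact ratio_algebra hI hVee.det_pos ha hdj
end

section
/- Let p ≥ 2 and let G = (V,E) be a graph on V = {1,…,p} with edge set E ⊆ W := {(i,j) : 1 ≤ i < j ≤ p}, and let Ē := W ∖ E denote the non-edges. Identify a point (κ,θ) ∈ ℝ^p × ℝ^E with the symmetric p×p matrix K having diagonal entries κ, entries θ_e at the positions of edges e ∈ E, and zeros elsewhere; Lebesgue measure is used on ℝ^p × ℝ^E. For e ∈ Ē, write G^{+e} = (V, E ∪ {e}); let drop_e : ℝ^p × ℝ^{E∪{e}} → ℝ^p × ℝ^E delete the coordinate θ_e, and for (κ,θ) ∈ ℝ^p × ℝ^E and t ∈ ℝ let ins_e(κ,θ,t) ∈ ℝ^p × ℝ^{E∪{e}} insert t at coordinate e. Suppose measurable nonnegative functions p_G on ℝ^p × ℝ^E, p_{G^{+e}} on ℝ^p × ℝ^{E∪{e}}, β_e on ℝ^p × ℝ^E, δ_e on ℝ^p × ℝ^{E∪{e}}, and b_e : ℝ × (ℝ^p × ℝ^{E∪{e}}) → [0,∞) satisfy: (i) for every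 e ∈ Ē and every K⁺ = (κ,θ⁺) ∈ ℝ^p × ℝ^{E∪{e}}, the pointwise relation δ_e(K⁺)·p_{G^{+e}}(K⁺) = β_e(drop_e(K⁺))·b_e(θ⁺_e; K⁺)·p_G(drop_e(K⁺)); and (ii) for every e ∈ Ē and every K ∈ ℝ^p × ℝ^E, ∫_ℝ b_e(t; ins_e(K,t)) dt = 1 (b_e is a probability density for the new entry). Then for every measurable set F ⊆ ℝ^p × ℝ^E: ∫_F Σ_{e∈Ē} β_e(K)·p_G(K) dK = Σ_{e∈Ē} ∫_{ℝ^p × ℝ^{E∪{e}}} δ_e(K⁺) · 1_F(drop_e(K⁺)) · p_{G^{+e}}(K⁺) dK⁺. -/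
open MeasureTheory ENNReal

/-- Delete the coordinate `θ_e` from a point of `ℝ^p × ℝ^{E∪{e}}`. -/
def dropI (p : ℕ) (E : Finset (Fin p × Fin p)) (e : Fin p × Fin p)
    (x : (Fin p → ℝ) × ({q // q ∈ insert e E} → ℝ)) :
    (Fin p → ℝ) × ({q // q ∈ E} → ℝ) :=
  (x.1, fun q => x.2 ⟨q.val, Finset.mem_insert_of_mem q.prop⟩)

/-- Insert the value `t` at coordinate `e` into a point of `ℝ^p × ℝ^E`. -/
def insI (p : ℕ) (E : Finset (Fin p × Fin p)) (e : Fin p × Fin p)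
    (x : (Fin p → ℝ) × ({q // q ∈ E} → ℝ)) (t : ℝ) :
    (Fin p → ℝ) × ({q // q ∈ insert e E} → ℝ) :=
  (x.1, fun q =>
    if h : q.val = e then t
    else x.2 ⟨q.val, (Finset.mem_insert.mp q.prop).resolve_left h⟩)

lemma dropI_insI (p : ℕ) (E : Finset (Fin p × Fin p)) (e : Fin p × Fin p) (he : e ∉ E)
    (x : (Fin p → ℝ) × ({q // q ∈ E} → ℝ)) (t : ℝ) :
    dropI p E e (insI p E e x t) = x := by
  ext q
  · rfl
  · show (insI p E e x t).2 _ = _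
    simp only [insI]
    rw [dif_neg]
    intro h
    exact he (h ▸ q.prop)

lemma insI_apply_e (p : ℕ) (E : Finset (Fin p × Fin p)) (e : Fin p × Fin p)
    (x : (Fin p → ℝ) × ({q // q ∈ E} → ℝ)) (t : ℝ) :
    (insI p E e x t).2 ⟨e, Finset.mem_insert_self e E⟩ = t := by
  simp [insI]

lemma measurable_dropI (p : ℕ) (E : Finset (Fin p × Fin p)) (e : Fin p × Fin p) :
    Measurable (dropI p E e) := by
  apply Measurable.prodMk measurable_fst
  exact measurable_pi_lambda _ fun q => (measurable_pi_apply _).comp measurable_snd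

lemma measurePreserving_insI (p : ℕ) (E : Finset (Fin p × Fin p)) (e : Fin p × Fin p)
    (he : e ∉ E) :
    MeasurePreserving
      (fun z : ℝ × ((Fin p → ℝ) × ({q // q ∈ E} → ℝ)) => insI p E e z.2 z.1)
      volume volume := by
  classical
  set α := {q // q ∈ insert e E}
  set P : α → Prop := fun q => q.val = e with hP
  haveI : Unique {q : α // P q} :=
    ⟨⟨⟨⟨e, Finset.mem_insert_self e E⟩, rfl⟩⟩,
      fun a => Subtype.ext (Subtype.ext a.prop)⟩
  set ε : {q // q ∈ E} ≃ {q : α // ¬ P q} :=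
    { toFun := fun q => ⟨⟨q.val, Finset.mem_insert_of_mem q.prop⟩,
        fun h => he (h ▸ q.prop)⟩
      invFun := fun q => ⟨q.val.val, (Finset.mem_insert.mp q.val.prop).resolve_left q.prop⟩
      left_inv := fun q => rfl
      right_inv := fun q => rfl } with hε
  have h1 : MeasurePreserving ((MeasurableEquiv.funUnique {q : α // P q} ℝ).symm)
      volume volume := by
    refine MeasurePreserving.symm _ ?_
    convert volume_preserving_funUnique {q : α // P q} ℝ using 2
    all_goals exact congrArg (fun i : Fintype {q : α // P q} => @MeasureTheory.MeasureSpace.pi {q : α // P q} i (fun _ => ℝ) (fun _ => Real.measureSpace)) (Subsingleton.elim _ _)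
  have h2 : MeasurePreserving (MeasurableEquiv.piCongrLeft (fun _ => ℝ) ε) volume volume :=
    volume_measurePreserving_piCongrLeft _ ε
  have h3 : MeasurePreserving ((MeasurableEquiv.piEquivPiSubtypeProd (fun _ : α => ℝ) P).symm)
      volume volume :=
    (volume_preserving_piEquivPiSubtypeProd (fun _ : α => ℝ) P).symm _
  have m1 : MeasurePreserving
      (fun y : ℝ × ({q // q ∈ E} → ℝ) =>
        (MeasurableEquiv.piEquivPiSubtypeProd (fun _ : α => ℝ) P).symm
          ((MeasurableEquiv.funUnique {q : α // P q} ℝ).symm y.1,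
           MeasurableEquiv.piCongrLeft (fun _ => ℝ) ε y.2))
      volume volume := h3.comp (h1.prod h2)
  -- rearrangement ℝ × (A × B) → A × (ℝ × B)
  have s1 : MeasurePreserving
      ((MeasurableEquiv.prodAssoc :
        (ℝ × (Fin p → ℝ)) × ({q // q ∈ E} → ℝ) ≃ᵐ
          ℝ × ((Fin p → ℝ) × ({q // q ∈ E} → ℝ))).symm) volume volume :=
    (volume_preserving_prodAssoc).symm _
  have s2 : MeasurePreserving
      (Prod.map (Prod.swap : ℝ × (Fin p → ℝ) → (Fin p → ℝ) × ℝ)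
        (id : ({q // q ∈ E} → ℝ) → ({q // q ∈ E} → ℝ))) volume volume :=
    MeasurePreserving.prod Measure.measurePreserving_swap (MeasurePreserving.id _)
  have s3 : MeasurePreserving
      (MeasurableEquiv.prodAssoc :
        ((Fin p → ℝ) × ℝ) × ({q // q ∈ E} → ℝ) ≃ᵐ
          (Fin p → ℝ) × (ℝ × ({q // q ∈ E} → ℝ))) volume volume :=
    volume_preserving_prodAssoc
  have big : MeasurePreserving
      ((Prod.map (id : (Fin p → ℝ) → (Fin p → ℝ))
          (fun y : ℝ × ({q // q ∈ E} → ℝ) =>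
            (MeasurableEquiv.piEquivPiSubtypeProd (fun _ : α => ℝ) P).symm
              ((MeasurableEquiv.funUnique {q : α // P q} ℝ).symm y.1,
               MeasurableEquiv.piCongrLeft (fun _ => ℝ) ε y.2))) ∘
        (MeasurableEquiv.prodAssoc :
          ((Fin p → ℝ) × ℝ) × ({q // q ∈ E} → ℝ) ≃ᵐ _) ∘
        (Prod.map Prod.swap id) ∘
        ((MeasurableEquiv.prodAssoc :
          (ℝ × (Fin p → ℝ)) × ({q // q ∈ E} → ℝ) ≃ᵐ _).symm))
      volume volume :=
    ((MeasurePreserving.id _).prod m1).comp (s3.comp (s2.comp s1))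
  convert big using 1
  rfl

/-- The birth-side detailed balance condition (equation (A.2) of the paper): if the
pointwise relation
`δ_e(K⁺)·p_{G^{+e}}(K⁺) = β_e(drop_e K⁺)·b_e(θ⁺_e; K⁺)·p_G(drop_e K⁺)` holds and each
birth proposal density `b_e` integrates to one, then for every measurable `F`, the flow
out of `F` due to births equals the flow into `F` due to deaths from the larger graphs
`G^{+e}`. -/
theorem birth_side_detailed_balance (p : ℕ) (hp : 2 ≤ p)
    (E Ebar : Finset (Fin p × Fin p))
    (hEW : E ⊆ Finset.univ.filter (fun q : Fin p × Fin p => q.1 < q.2))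
    (hEbar : Ebar = (Finset.univ.filter (fun q : Fin p × Fin p => q.1 < q.2)) \ E)
    (pG : (Fin p → ℝ) × ({q // q ∈ E} → ℝ) → ℝ)
    (pGp : (e : Fin p × Fin p) → (Fin p → ℝ) × ({q // q ∈ insert e E} → ℝ) → ℝ)
    (βe : (Fin p × Fin p) → (Fin p → ℝ) × ({q // q ∈ E} → ℝ) → ℝ)
    (δe : (e : Fin p × Fin p) → (Fin p → ℝ) × ({q // q ∈ insert e E} → ℝ) → ℝ)
    (be : (e : Fin p × Fin p) →
      ℝ × ((Fin p → ℝ) × ({q // q ∈ insert e E} → ℝ)) → ℝ)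
    (hpG : Measurable pG) (hpG0 : ∀ x, 0 ≤ pG x)
    (hpGp : ∀ e, Measurable (pGp e)) (hpGp0 : ∀ e x, 0 ≤ pGp e x)
    (hβ : ∀ e, Measurable (βe e)) (hβ0 : ∀ e x, 0 ≤ βe e x)
    (hδ : ∀ e, Measurable (δe e)) (hδ0 : ∀ e x, 0 ≤ δe e x)
    (hbe : ∀ e, Measurable (be e)) (hbe0 : ∀ e x, 0 ≤ be e x)
    (hbal : ∀ e ∈ Ebar, ∀ x : (Fin p → ℝ) × ({q // q ∈ insert e E} → ℝ),
      δe e x * pGp e x =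
        βe e (dropI p E e x) * be e (x.2 ⟨e, Finset.mem_insert_self e E⟩, x) *
          pG (dropI p E e x))
    (hprob : ∀ e ∈ Ebar, ∀ x : (Fin p → ℝ) × ({q // q ∈ E} → ℝ),
      (∫⁻ t : ℝ, ENNReal.ofReal (be e (t, insI p E e x t))) = 1) :
    ∀ F : Set ((Fin p → ℝ) × ({q // q ∈ E} → ℝ)), MeasurableSet F →
      (∫⁻ x in F, ENNReal.ofReal ((∑ e ∈ Ebar, βe e x) * pG x))
        = ∑ e ∈ Ebar, ∫⁻ y, ENNReal.ofReal (δe e y) *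
            F.indicator (fun _ => (1 : ℝ≥0∞)) (dropI p E e y) *
            ENNReal.ofReal (pGp e y) := by
  intro F hF
  -- compute each summand on the RHS
  have key : ∀ e ∈ Ebar,
      (∫⁻ y, ENNReal.ofReal (δe e y) *
          F.indicator (fun _ => (1 : ℝ≥0∞)) (dropI p E e y) *
          ENNReal.ofReal (pGp e y))
        = ∫⁻ x in F, ENNReal.ofReal (βe e x * pG x) := by
    intro e heb
    have he : e ∉ E := by
      rw [hEbar] at heb
      exact (Finset.mem_sdiff.mp heb).2
    -- the integrand on the big space
    set f : (Fin p → ℝ) × ({q // q ∈ insert e E} → ℝ) → ℝ≥0∞ := fun y =>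
      ENNReal.ofReal (δe e y) *
        F.indicator (fun _ => (1 : ℝ≥0∞)) (dropI p E e y) *
        ENNReal.ofReal (pGp e y) with hfdef
    have hfmeas : Measurable f := by
      apply Measurable.mul
      apply Measurable.mul
      · exact (hδ e).ennreal_ofReal
      · exact (measurable_const.indicator hF).comp (measurable_dropI p E e)
      · exact (hpGp e).ennreal_ofReal
    have step1 : (∫⁻ y, f y)
        = ∫⁻ z : ℝ × ((Fin p → ℝ) × ({q // q ∈ E} → ℝ)), f (insI p E e z.2 z.1) :=
      ((measurePreserving_insI p E e he).lintegral_comp hfmeas).symm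
    have hins_meas : Measurable
        (fun z : ℝ × ((Fin p → ℝ) × ({q // q ∈ E} → ℝ)) => insI p E e z.2 z.1) :=
      (measurePreserving_insI p E e he).measurable
    -- pointwise rewrite
    have hpt : ∀ z : ℝ × ((Fin p → ℝ) × ({q // q ∈ E} → ℝ)),
        f (insI p E e z.2 z.1)
          = ENNReal.ofReal (βe e z.2 * pG z.2) *
              F.indicator (fun _ => (1 : ℝ≥0∞)) z.2 *
              ENNReal.ofReal (be e (z.1, insI p E e z.2 z.1)) := by
      rintro ⟨t, x⟩
      simp only [hfdef]
      rw [mul_right_comm, ← ENNReal.ofReal_mul (hδ0 e _), hbal e heb,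
        insI_apply_e, dropI_insI p E e he]
      rw [show βe e x * be e (t, insI p E e x t) * pG x
          = (βe e x * pG x) * be e (t, insI p E e x t) from by ring]
      rw [ENNReal.ofReal_mul (mul_nonneg (hβ0 e x) (hpG0 x)), mul_right_comm]
    have step2 : (∫⁻ z : ℝ × ((Fin p → ℝ) × ({q // q ∈ E} → ℝ)), f (insI p E e z.2 z.1))
        = ∫⁻ x : (Fin p → ℝ) × ({q // q ∈ E} → ℝ), ∫⁻ t : ℝ,
            ENNReal.ofReal (βe e x * pG x) *
              F.indicator (fun _ => (1 : ℝ≥0∞)) x *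
              ENNReal.ofReal (be e (t, insI p E e x t)) := by
      simp_rw [hpt]
      exact lintegral_prod_symm _ (by
        apply Measurable.aemeasurable
        apply Measurable.mul
        apply Measurable.mul
        · exact (((hβ e).comp measurable_snd).mul (hpG.comp measurable_snd)).ennreal_ofReal
        · exact (measurable_const.indicator hF).comp measurable_snd
        · exact ((hbe e).comp ((measurable_fst).prodMk hins_meas)).ennreal_ofReal)
    have step3 : ∀ x : (Fin p → ℝ) × ({q // q ∈ E} → ℝ),
        (∫⁻ t : ℝ,
            ENNReal.ofReal (βe e x * pG x) *
              F.indicator (fun _ => (1 : ℝ≥0∞)) x *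
              ENNReal.ofReal (be e (t, insI p E e x t)))
          = F.indicator (fun x => ENNReal.ofReal (βe e x * pG x)) x := by
      intro x
      have hmt : Measurable (fun t : ℝ => ENNReal.ofReal (be e (t, insI p E e x t))) :=
        ((hbe e).comp (measurable_id.prodMk
          (hins_meas.comp (measurable_id.prodMk measurable_const)))).ennreal_ofReal
      rw [lintegral_const_mul _ hmt, hprob e heb x, mul_one]
      by_cases hx : x ∈ F
      · simp [hx]
      · simp [hx]
    rw [hfdef] at step1
    rw [step1, step2]
    simp_rw [step3]
    rw [lintegral_indicator]
    exact hF
  rw [Finset.sum_congr rfl key]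
  have h1 : (∫⁻ x in F, ENNReal.ofReal ((∑ e ∈ Ebar, βe e x) * pG x))
      = ∫⁻ x in F, ∑ e ∈ Ebar, ENNReal.ofReal (βe e x * pG x) := by
    apply lintegral_congr
    intro x
    rw [Finset.sum_mul, ENNReal.ofReal_sum_of_nonneg]
    exact fun e _ => mul_nonneg (hβ0 e x) (hpG0 x)
  rw [h1, lintegral_finset_sum]
  exact fun e _ => ((hβ e).mul hpG).ennreal_ofReal
end
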